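/- arXiv:1207.3601 — 4 statements merged into one kernel-verified Lean document; each statement's English description precedes it below -/
import Mathlib

section
/- Let μ: 2^Γ → [0,1] be a symmetric polymatroidal function over a group Γ taking values in [0,1], and let (G=(V,E),ψ) be a finite Γ-gain graph. Then the function g_μ defined on subsets F of E by g_μ(F) = |V(F)| − c(F) + Σ_{X ∈ C(F)} μ⟨X⟩, where C(F) is the set of connected components of F, c(F) = |C(F)|, and μ⟨X⟩ = μ(⟨X⟩_{ψ,v}) for any base vertex v ∈ V(X), is monotone and submodular on 2^E. -/
/-- A directed multigraph: edges with a source and target map. -/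
structure GG (V E : Type*) where
  src : E → V
  tgt : E → V

namespace GG

variable {V E : Type*}

/-- The initial vertex of a step (an edge together with a direction). -/
def stepHead (G : GG V E) (s : E × Bool) : V := if s.2 then G.src s.1 else G.tgt s.1

/-- The final vertex of a step. -/
def stepLast (G : GG V E) (s : E × Bool) : V := if s.2 then G.tgt s.1 else G.src s.1

/-- Walks from `u` to `w` using only edges of `X`. -/
inductive IsWalkFrom (G : GG V E) (X : Set E) : V → V → List (E × Bool) → Prop
  | nil (v : V) : IsWalkFrom G X v v []
  | cons {u w : V} {s : E × Bool} {l : List (E × Bool)} (he : s.1 ∈ X)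
      (h1 : G.stepHead s = u) (hl : IsWalkFrom G X (G.stepLast s) w l) :
      IsWalkFrom G X u w (s :: l)

variable {Γ : Type*} [Group Γ]

/-- The gain of a walk: the product of the edge gains, inverted on backward edges. -/
def gainOf (ψ : E → Γ) : List (E × Bool) → Γ
  | [] => 1
  | s :: l => (if s.2 then ψ s.1 else (ψ s.1)⁻¹) * gainOf ψ l

/-- `⟨X⟩_{ψ,v}`: the subgroup generated by gains of closed walks at `v` using edges of `X`. -/
def walkGroup (G : GG V E) (ψ : E → Γ) (X : Set E) (v : V) : Subgroup Γ :=
  Subgroup.closure {g : Γ | ∃ l, G.IsWalkFrom X v v l ∧ gainOf ψ l = g}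

open Classical in
/-- The switching of the gain function `ψ` at vertex `v` with `γ`. -/
noncomputable def switch (G : GG V E) (ψ : E → Γ) (v : V) (γ : Γ) : E → Γ :=
  fun e => (if G.src e = v then γ else 1) * ψ e * (if G.tgt e = v then γ⁻¹ else 1)

/-- Two gain functions are equivalent if one is obtained from the other by a
finite sequence of switchings. -/
def Equivalent (G : GG V E) (ψ ψ' : E → Γ) : Prop :=
  Relation.ReflTransGen (fun a b => ∃ v γ, b = G.switch a v γ) ψ ψ'

/-- `V(X)`: the set of endvertices of edges of `X`. -/
def VSet (G : GG V E) (X : Set E) : Set V := {v | ∃ e ∈ X, G.src e = v ∨ G.tgt e = v}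

variable [Fintype V] [Fintype E] [DecidableEq V] [DecidableEq E]

/-- The finset of endvertices of the edges of `F`. -/
def vertexFinset (G : GG V E) (F : Finset E) : Finset V :=
  F.image G.src ∪ F.image G.tgt

/-- Two edges of `F` lie in the same connected component of `F`. -/
def compRel (G : GG V E) (F : Finset E) (e f : {x // x ∈ F}) : Prop :=
  ∃ l, G.IsWalkFrom ↑F (G.src e.1) (G.src f.1) l

/-- `c(F)`: the number of connected components of the edge set `F`. -/
noncomputable def numComp (G : GG V E) (F : Finset E) : ℕ :=
  Nat.card (Quot (G.compRel F))

/-- The connected component of `F` containing the edge `e`. -/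
def compCl (G : GG V E) (F : Finset E) (e : E) : Set E :=
  {f | f ∈ F ∧ ∃ l, G.IsWalkFrom ↑F (G.src e) (G.src f) l}

/-- `g_μ(F) = |V(F)| − c(F) + Σ_{X ∈ C(F)} μ⟨X⟩`, the sum being over the connected
components of `F`, each evaluated at a base vertex of the component. -/
noncomputable def gMu (G : GG V E) (ψ : E → Γ) (μ : Set Γ → ℝ) (F : Finset E) : ℝ :=
  ((G.vertexFinset F).card : ℝ) - (G.numComp F : ℝ) +
    ∑ᶠ q : Quot (G.compRel F),
      μ ↑(G.walkGroup ψ (G.compCl F q.out.1) (G.src q.out.1))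

end GG

namespace GG

variable {V E : Type*} {G : GG V E}

section Walks
variable {X Y : Set E} {u v w : V}

/-- Reachability by a walk. -/
def Reaches (G : GG V E) (X : Set E) (u w : V) : Prop := ∃ l, G.IsWalkFrom X u w l

theorem isWalkFrom_single {s : E × Bool} (hs : s.1 ∈ X) :
    G.IsWalkFrom X (G.stepHead s) (G.stepLast s) [s] :=
  .cons hs rfl (.nil _)

theorem IsWalkFrom.append {l₁ l₂ : List (E × Bool)} (h₁ : G.IsWalkFrom X u v l₁)
    (h₂ : G.IsWalkFrom X v w l₂) : G.IsWalkFrom X u w (l₁ ++ l₂) := by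
  induction h₁ with
  | nil => simpa using h₂
  | cons he h1 hl ih => exact .cons he h1 (ih h₂)

theorem IsWalkFrom.mono (hXY : X ⊆ Y) {l} (h : G.IsWalkFrom X u w l) :
    G.IsWalkFrom Y u w l := by
  induction h with
  | nil => exact .nil _
  | cons he h1 hl ih => exact .cons (hXY he) h1 ih

theorem IsWalkFrom.edges_mem {l} (h : G.IsWalkFrom X u w l) : ∀ s ∈ l, s.1 ∈ X := by
  induction h with
  | nil => simp
  | cons he h1 hl ih =>
      intro s hs
      rcases List.mem_cons.1 hs with rfl | hs'
      · exact he
      · exact ih s hs'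

/-- Reversing a step. -/
def stepRev (s : E × Bool) : E × Bool := (s.1, !s.2)

@[simp] theorem stepHead_stepRev (s : E × Bool) : G.stepHead (stepRev s) = G.stepLast s := by
  cases s with | mk e b => cases b <;> simp [stepRev, stepHead, stepLast]

@[simp] theorem stepLast_stepRev (s : E × Bool) : G.stepLast (stepRev s) = G.stepHead s := by
  cases s with | mk e b => cases b <;> simp [stepRev, stepHead, stepLast]

theorem IsWalkFrom.reverse {l} (h : G.IsWalkFrom X u w l) :
    G.IsWalkFrom X w u ((l.map stepRev).reverse) := by
  induction h with
  | nil => exact .nil _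
  | @cons u w s l he h1 hl ih =>
      have hstep : G.IsWalkFrom X (G.stepLast s) u [stepRev s] := by
        have := isWalkFrom_single (G := G) (s := stepRev s) (X := X) (by simpa [stepRev] using he)
        simpa [h1] using this
      simpa using ih.append hstep

variable {Γ : Type*} [Group Γ] {ψ : E → Γ}

theorem gainOf_append (l₁ l₂ : List (E × Bool)) :
    gainOf ψ (l₁ ++ l₂) = gainOf ψ l₁ * gainOf ψ l₂ := by
  induction l₁ with
  | nil => simp [gainOf]
  | cons s l ih => simp [gainOf, ih, mul_assoc]

@[simp] theorem gainOf_stepRev (s : E × Bool) :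
    gainOf ψ [stepRev s] = (gainOf ψ [s])⁻¹ := by
  cases s with | mk e b => cases b <;> simp [gainOf, stepRev]

theorem gainOf_reverse (l : List (E × Bool)) :
    gainOf ψ ((l.map stepRev).reverse) = (gainOf ψ l)⁻¹ := by
  induction l with
  | nil => simp [gainOf]
  | cons s l ih =>
      have : gainOf ψ (s :: l) = gainOf ψ [s] * gainOf ψ l := by
        simp [gainOf]
      simp [gainOf_append, ih, this, mul_inv_rev]

theorem Reaches.refl (G : GG V E) (X : Set E) (v : V) : G.Reaches X v v := ⟨[], .nil _⟩

theorem Reaches.symm (h : G.Reaches X u w) : G.Reaches X w u := by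
  obtain ⟨l, hl⟩ := h; exact ⟨_, hl.reverse⟩

theorem Reaches.trans (h₁ : G.Reaches X u v) (h₂ : G.Reaches X v w) : G.Reaches X u w := by
  obtain ⟨l₁, h₁⟩ := h₁; obtain ⟨l₂, h₂⟩ := h₂; exact ⟨_, h₁.append h₂⟩

theorem Reaches.mono (hXY : X ⊆ Y) (h : G.Reaches X u w) : G.Reaches Y u w := by
  obtain ⟨l, hl⟩ := h; exact ⟨l, hl.mono hXY⟩

theorem reaches_stepLast {s : E × Bool} (hs : s.1 ∈ X) :
    G.Reaches X (G.stepHead s) (G.stepLast s) := ⟨[s], isWalkFrom_single hs⟩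

end Walks

end GG

namespace GG

variable {V E : Type*} {G : GG V E}

section Struct
variable {X Y : Set E} {u v w : V}

/-- The component of the edge set `X` at the vertex `v`. -/
def CompAt (G : GG V E) (X : Set E) (v : V) : Set E :=
  {f | f ∈ X ∧ G.Reaches X v (G.src f)}

theorem stepHead_mem_VSet {s : E × Bool} (hs : s.1 ∈ X) : G.stepHead s ∈ G.VSet X := by
  cases hb : s.2 <;> exact ⟨s.1, hs, by simp [stepHead, hb]⟩

theorem stepLast_mem_VSet {s : E × Bool} (hs : s.1 ∈ X) : G.stepLast s ∈ G.VSet X := by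
  cases hb : s.2 <;> exact ⟨s.1, hs, by simp [stepLast, hb]⟩

theorem IsWalkFrom.last_mem {l} (h : G.IsWalkFrom X u w l) : w = u ∨ w ∈ G.VSet X := by
  induction h with
  | nil => exact Or.inl rfl
  | @cons u w s l he h1 hl ih =>
      rcases ih with rfl | h
      · exact Or.inr (stepLast_mem_VSet he)
      · exact Or.inr h

theorem Reaches.last_mem (h : G.Reaches X u w) : w = u ∨ w ∈ G.VSet X := by
  obtain ⟨l, hl⟩ := h; exact hl.last_mem

theorem Reaches.eq_of_not_mem (h : G.Reaches X u w) (hu : u ∉ G.VSet X) : w = u := by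
  obtain ⟨l, hl⟩ := h
  cases hl with
  | nil => rfl
  | cons he h1 hl => exact absurd (h1 ▸ stepHead_mem_VSet he) hu

theorem reaches_src_of_endpoint {f : E} (hf : f ∈ X) (hv : G.src f = v ∨ G.tgt f = v) :
    G.Reaches X (G.src f) v := by
  rcases hv with h | h
  · exact h ▸ Reaches.refl G X _
  · have h1 : G.stepHead (f, true) = G.src f := by simp [stepHead]
    have h2 : G.stepLast (f, true) = G.tgt f := by simp [stepLast]
    have := reaches_stepLast (G := G) (X := X) (s := (f, true)) hf
    rw [h1, h2, h] at this; exact this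

theorem mem_VSet_of_reaches {f : E} (hf : f ∈ X) (h : G.Reaches X v (G.src f)) :
    (hv : G.src f = w ∨ G.tgt f = w) → G.Reaches X v w := fun hv =>
  h.trans (reaches_src_of_endpoint hf hv)

/-- A walk stays inside the component of its starting point. -/
theorem IsWalkFrom.compAt {l} (h : G.IsWalkFrom X u w l) (hv : G.Reaches X v u) :
    G.IsWalkFrom (G.CompAt X v) u w l := by
  induction h with
  | nil => exact .nil _
  | @cons u w s l he h1 hl ih =>
      have hu : G.Reaches X v (G.stepLast s) := hv.trans (h1 ▸ reaches_stepLast he)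
      have hsrc : G.Reaches X v (G.src s.1) := by
        cases hb : s.2
        · have hh : G.stepLast s = G.src s.1 := by simp [stepLast, hb]
          exact hh ▸ hu
        · have hh : G.stepHead s = G.src s.1 := by simp [stepHead, hb]
          rw [hh] at h1; exact h1 ▸ hv
      exact .cons ⟨he, hsrc⟩ h1 (ih hu)

theorem Reaches.compAt (h : G.Reaches X u w) (hv : G.Reaches X v u) :
    G.Reaches (G.CompAt X v) u w := by
  obtain ⟨l, hl⟩ := h; exact ⟨l, hl.compAt hv⟩

theorem compAt_congr (h : G.Reaches X u v) : G.CompAt X u = G.CompAt X v := by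
  ext f; exact ⟨fun ⟨hf, hr⟩ => ⟨hf, h.symm.trans hr⟩, fun ⟨hf, hr⟩ => ⟨hf, h.trans hr⟩⟩

theorem compAt_subset (X : Set E) (v : V) : G.CompAt X v ⊆ X := fun _ hf => hf.1

theorem VSet_mono (hXY : X ⊆ Y) : G.VSet X ⊆ G.VSet Y := by
  rintro x ⟨f, hf, h⟩; exact ⟨f, hXY hf, h⟩

theorem VSet_compAt_subset (X : Set E) (v : V) : G.VSet (G.CompAt X v) ⊆ G.VSet X :=
  VSet_mono (compAt_subset X v)

/-- Endpoints of edges in the component at `v` are reachable from `v`. -/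
theorem reaches_of_mem_VSet_compAt (hw : w ∈ G.VSet (G.CompAt X v)) : G.Reaches X v w := by
  obtain ⟨f, ⟨hf, hr⟩, h⟩ := hw
  exact mem_VSet_of_reaches hf hr h

/-- S1: a walk in `insert e F` starting at a vertex which cannot reach the
endpoints of `e` in `F` does not use `e`. -/
theorem IsWalkFrom.of_insert_not_reach {e : E} {F : Set E} {l}
    (h : G.IsWalkFrom (insert e F) u w l)
    (hp : ¬ G.Reaches F u (G.src e)) (hq : ¬ G.Reaches F u (G.tgt e)) :
    G.IsWalkFrom F u w l := by
  induction h with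
  | nil => exact .nil _
  | @cons u w s l he h1 hl ih =>
      rcases he with he | hsF
      · exfalso
        have : G.stepHead s = G.src e ∨ G.stepHead s = G.tgt e := by
          cases hb : s.2
          · exact Or.inr (by simp [stepHead, hb, he])
          · exact Or.inl (by simp [stepHead, hb, he])
        rw [h1] at this
        rcases this with hh | hh
        · exact hp (by rw [hh]; exact Reaches.refl G F _)
        · exact hq (by rw [hh]; exact Reaches.refl G F _)
      · have hstep : G.Reaches F u (G.stepLast s) := h1 ▸ reaches_stepLast hsF
        exact .cons hsF h1 (ih (fun hr => hp (hstep.trans hr)) (fun hr => hq (hstep.trans hr)))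

/-- S8: if the endpoints of `e` are already connected in `F`, inserting `e` creates
no new reachability. -/
theorem reaches_of_insert_connected {e : E} {F : Set E}
    (hqp : G.Reaches F (G.tgt e) (G.src e)) {l}
    (h : G.IsWalkFrom (insert e F) u w l) : G.Reaches F u w := by
  induction h with
  | nil => exact Reaches.refl G F _
  | @cons u w s l he h1 hl ih =>
      have hstep : G.Reaches F u (G.stepLast s) := by
        rcases he with he | hsF
        · cases hb : s.2
          · have h2 : G.stepHead s = G.tgt e := by simp [stepHead, hb, he]
            have h3 : G.stepLast s = G.src e := by simp [stepLast, hb, he]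
            rw [← h1, h2, h3]; exact hqp
          · have h2 : G.stepHead s = G.src e := by simp [stepHead, hb, he]
            have h3 : G.stepLast s = G.tgt e := by simp [stepLast, hb, he]
            rw [← h1, h2, h3]; exact hqp.symm
        · exact h1 ▸ reaches_stepLast hsF
      exact hstep.trans ih

/-- S9: reachability in `insert e F` decomposes. -/
theorem reaches_insert_cases {e : E} {F : Set E} {l}
    (h : G.IsWalkFrom (insert e F) u w l) :
    G.Reaches F u w ∨ (G.Reaches F u (G.src e) ∧ G.Reaches F (G.tgt e) w) ∨
      (G.Reaches F u (G.tgt e) ∧ G.Reaches F (G.src e) w) := by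
  induction h with
  | nil => exact Or.inl (Reaches.refl G F _)
  | @cons u w s l he h1 hl ih =>
      rcases he with he | hsF
      · cases hb : s.2
        · have h2 : u = G.tgt e := by rw [← h1]; simp [stepHead, hb, he]
          have h3 : G.stepLast s = G.src e := by simp [stepLast, hb, he]
          rw [h3] at ih
          rcases ih with h4 | ⟨h4, h5⟩ | ⟨h4, h5⟩
          · exact Or.inr (Or.inr ⟨by rw [h2]; exact Reaches.refl G F _, h4⟩)
          · exact Or.inl (by rw [h2]; exact h5)
          · exact Or.inr (Or.inr ⟨by rw [h2]; exact Reaches.refl G F _, h5⟩)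
        · have h2 : u = G.src e := by rw [← h1]; simp [stepHead, hb, he]
          have h3 : G.stepLast s = G.tgt e := by simp [stepLast, hb, he]
          rw [h3] at ih
          rcases ih with h4 | ⟨h4, h5⟩ | ⟨h4, h5⟩
          · exact Or.inr (Or.inl ⟨by rw [h2]; exact Reaches.refl G F _, h4⟩)
          · exact Or.inl (by rw [h2]; exact h4.symm.trans h5)
          · exact Or.inl (by rw [h2]; exact h5)
      · have hstep : G.Reaches F u (G.stepLast s) := h1 ▸ reaches_stepLast hsF
        rcases ih with h4 | ⟨h4, h5⟩ | ⟨h4, h5⟩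
        · exact Or.inl (hstep.trans h4)
        · exact Or.inr (Or.inl ⟨hstep.trans h4, h5⟩)
        · exact Or.inr (Or.inr ⟨hstep.trans h4, h5⟩)

/-- S5: a walk in a disjoint union starting on the `C₁` side stays in `C₁`. -/
theorem IsWalkFrom.of_union_sep {C₁ C₂ : Set E} {l}
    (hdisj : ∀ x, x ∈ G.VSet C₁ → x ∉ G.VSet C₂) (hu : u ∉ G.VSet C₂)
    (h : G.IsWalkFrom (C₁ ∪ C₂) u w l) : G.IsWalkFrom C₁ u w l := by
  induction h with
  | nil => exact .nil _
  | @cons u w s l he h1 hl ih =>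
      have hs1 : s.1 ∈ C₁ := by
        rcases he with h | h
        · exact h
        · exact absurd (h1 ▸ stepHead_mem_VSet h) hu
      have hlast : G.stepLast s ∉ G.VSet C₂ := hdisj _ (stepLast_mem_VSet hs1)
      exact .cons hs1 h1 (ih hlast)

end Struct

end GG

namespace GG

variable {V E : Type*} {G : GG V E}

set_option linter.unusedSectionVars false

section Splice
variable {Γ : Type*} [Group Γ] {ψ : E → Γ} {X : Set E} {u v w : V} [DecidableEq E]

@[simp] theorem stepHead_tt {e : E} : G.stepHead (e, true) = G.src e := rfl
@[simp] theorem stepHead_ff {e : E} : G.stepHead (e, false) = G.tgt e := rfl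
@[simp] theorem stepLast_tt {e : E} : G.stepLast (e, true) = G.tgt e := rfl
@[simp] theorem stepLast_ff {e : E} : G.stepLast (e, false) = G.src e := rfl

theorem gainOf_cons' (s : E × Bool) (l : List (E × Bool)) :
    gainOf ψ (s :: l) = gainOf ψ [s] * gainOf ψ l := by
  simp [gainOf, mul_assoc]

@[simp] theorem gainOf_single_tt (e : E) : gainOf ψ [(e, true)] = ψ e := by
  simp [gainOf]

@[simp] theorem gainOf_single_ff (e : E) : gainOf ψ [(e, false)] = (ψ e)⁻¹ := by
  simp [gainOf]

theorem mem_walkGroup_of_walk {l} (h : G.IsWalkFrom X v v l) :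
    gainOf ψ l ∈ G.walkGroup ψ X v :=
  Subgroup.subset_closure ⟨l, h, rfl⟩

theorem walkGroup_mono {Y : Set E} (hXY : X ⊆ Y) : G.walkGroup ψ X v ≤ G.walkGroup ψ Y v := by
  apply Subgroup.closure_mono
  rintro g ⟨l, hl, rfl⟩
  exact ⟨l, hl.mono hXY, rfl⟩

/-- Splitting a walk in `insert e F` at the first use of `e`. -/
theorem IsWalkFrom.insert_split {e : E} {F : Set E} {l} (h : G.IsWalkFrom (insert e F) u w l) :
    G.IsWalkFrom F u w l ∨
      ∃ l₁ b l₂, l = l₁ ++ (e, b) :: l₂ ∧ G.IsWalkFrom F u (G.stepHead (e, b)) l₁ ∧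
        G.IsWalkFrom (insert e F) (G.stepLast (e, b)) w l₂ := by
  induction h with
  | nil => exact Or.inl (.nil _)
  | @cons u w s l he h1 hl ih =>
      by_cases hse : s.1 = e
      · have hs : (e, s.2) = s := by rw [← hse]
        refine Or.inr ⟨[], s.2, l, by rw [hs]; rfl, ?_, ?_⟩
        · rw [hs, h1]; exact .nil u
        · rw [hs]; exact hl
      · have hsF : s.1 ∈ F := (Set.mem_insert_iff.1 he).resolve_left hse
        rcases ih with h' | ⟨l₁, b, l₂, rfl, hw1, hw2⟩
        · exact Or.inl (.cons hsF h1 h')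
        · exact Or.inr ⟨s :: l₁, b, l₂, rfl, .cons hsF h1 hw1, hw2⟩

/-- Number of uses of the edge `e` in a walk. -/
def ecount (e : E) (l : List (E × Bool)) : ℕ := (l.map Prod.fst).count e

theorem ecount_eq_zero {e : E} {C : Set E} {l} (h : G.IsWalkFrom C u w l) (he : e ∉ C) :
    ecount e l = 0 := by
  refine List.count_eq_zero.2 (fun hmem => ?_)
  obtain ⟨s, hs, rfl⟩ := List.mem_map.1 hmem
  exact he (h.edges_mem s hs)

theorem ecount_append (e : E) (l₁ l₂ : List (E × Bool)) :
    ecount e (l₁ ++ l₂) = ecount e l₁ + ecount e l₂ := by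
  simp [ecount, List.count_append]

theorem ecount_cons_self (e : E) (b : Bool) (l : List (E × Bool)) :
    ecount e ((e, b) :: l) = ecount e l + 1 := by
  simp [ecount, List.count_cons]

end Splice

end GG

namespace GG

set_option linter.unusedSectionVars false

variable {V E : Type*} {G : GG V E}

section Splice2
variable {Γ : Type*} [Group Γ] {ψ : E → Γ} {u v w : V} [DecidableEq E]

theorem last_eq_of_head_eq {e : E} {b : Bool} {p q : V}
    (hor : (G.src e = p ∧ G.tgt e = q) ∨ (G.src e = q ∧ G.tgt e = p))
    (hhead : G.stepHead (e, b) = p) (hqp : q ≠ p) : G.stepLast (e, b) = q := by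
  cases b <;> rcases hor with ⟨h1, h2⟩ | ⟨h1, h2⟩ <;> simp_all

theorem gain_cancel (e : E) (b : Bool) :
    gainOf ψ [(e, b)] * gainOf ψ [(e, !b)] = 1 := by
  cases b <;> simp

/-- S2 (pendant edge): adding an edge whose far endpoint is isolated does not
change the walk group. -/
theorem walkGroup_insert_pendant {e : E} {C : Set E} {p q : V}
    (hor : (G.src e = p ∧ G.tgt e = q) ∨ (G.src e = q ∧ G.tgt e = p))
    (hqV : q ∉ G.VSet C) (hqp : q ≠ p) (heC : e ∉ C) :
    G.walkGroup ψ (insert e C) p = G.walkGroup ψ C p := by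
  refine le_antisymm ?_ (walkGroup_mono (Set.subset_insert _ _))
  rw [walkGroup]
  refine (Subgroup.closure_le _).2 ?_
  rintro g ⟨l, hl, rfl⟩
  suffices H : ∀ n l, List.length l ≤ n → G.IsWalkFrom (insert e C) p p l →
      gainOf ψ l ∈ G.walkGroup ψ C p by
    exact H l.length l le_rfl hl
  intro n
  induction n with
  | zero =>
      intro l hlen hwalk
      rw [List.length_eq_zero_iff.1 (Nat.le_zero.1 hlen)] at hwalk ⊢
      exact one_mem _
  | succ n ih =>
      intro l hlen hwalk
      rcases hwalk.insert_split with hC | ⟨l₁, b, l₂, rfl, h₁, h₂⟩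
      · exact mem_walkGroup_of_walk hC
      · have hor1 : G.stepHead (e, b) = p ∨ G.stepHead (e, b) = q := by
          rcases hor with ⟨h1, h2⟩ | ⟨h1, h2⟩ <;> cases b <;> simp [h1, h2]
        have hheadp : G.stepHead (e, b) = p := by
          rcases hor1 with h | h
          · exact h
          · exfalso
            rcases h₁.last_mem with h' | h'
            · exact hqp (h ▸ h')
            · exact hqV (h ▸ h')
        have hlastq : G.stepLast (e, b) = q := last_eq_of_head_eq hor hheadp hqp
        rw [hheadp] at h₁
        rw [hlastq] at h₂
        cases h₂ with
        | nil => exact absurd rfl hqp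
        | @cons _ _ s₂ l₃ he₂ h21 h22 =>
            have hs₂e : s₂.1 = e := by
              rcases Set.mem_insert_iff.1 he₂ with h | h
              · exact h
              · exact absurd (h21 ▸ stepHead_mem_VSet h) hqV
            have hs₂ : (e, s₂.2) = s₂ := by rw [← hs₂e]
            have hbne : s₂.2 = !b := by
              by_contra hne
              have hbb : s₂.2 = b := by
                cases hb2 : s₂.2 <;> cases hb : b <;> simp_all
              have h21' : G.stepHead (e, b) = q := by rw [← hbb, hs₂, h21]
              exact hqp (h21'.symm.trans hheadp)
            have hhead₂ : G.stepHead (e, !b) = q := by rw [← hbne, hs₂, h21]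
            have hlast₂ : G.stepLast s₂ = p := by
              rw [← hs₂, hbne]
              exact last_eq_of_head_eq (Or.symm hor) hhead₂ (Ne.symm hqp)
            rw [hlast₂] at h22
            have hnew : G.IsWalkFrom (insert e C) p p (l₁ ++ l₃) :=
              (h₁.mono (Set.subset_insert _ _)).append h22
            have hlen' : (l₁ ++ l₃).length ≤ n := by
              simp only [List.length_append, List.length_cons] at hlen ⊢
              omega
            have hg : gainOf ψ (l₁ ++ (e, b) :: s₂ :: l₃) = gainOf ψ (l₁ ++ l₃) := by
              rw [gainOf_append, gainOf_cons', gainOf_cons' s₂, ← hs₂, hbne,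
                ← mul_assoc (gainOf ψ [(e, b)]), gain_cancel, one_mul, ← gainOf_append]
            rw [hg]
            exact ih _ hlen' hnew

end Splice2

end GG

namespace GG

set_option linter.unusedSectionVars false
set_option linter.unusedVariables false

variable {V E : Type*} {G : GG V E}

section Splice3
variable {Γ : Type*} [Group Γ] {ψ : E → Γ} {u v w : V} [DecidableEq E]

theorem walk_e_tt {e : E} {C : Set E} :
    G.IsWalkFrom (insert e C) (G.src e) (G.tgt e) [(e, true)] := by
  have := isWalkFrom_single (G := G) (X := insert e C) (s := ((e : E), true))
    (Set.mem_insert _ _)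
  simpa using this

theorem walk_e_ff {e : E} {C : Set E} :
    G.IsWalkFrom (insert e C) (G.tgt e) (G.src e) [(e, false)] := by
  have := isWalkFrom_single (G := G) (X := insert e C) (s := ((e : E), false))
    (Set.mem_insert _ _)
  simpa using this

/-- Conjugating the walk group at `tgt e` by `ψ e` lands in the walk group of
`insert e C` at `src e`. -/
theorem conj_walkGroup_le {e : E} {C : Set E} :
    ∀ x ∈ G.walkGroup ψ C (G.tgt e),
      ψ e * x * (ψ e)⁻¹ ∈ G.walkGroup ψ (insert e C) (G.src e) := by
  intro x hx
  have h1 : (G.walkGroup ψ C (G.tgt e)).map (MulAut.conj (ψ e)).toMonoidHom ≤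
      G.walkGroup ψ (insert e C) (G.src e) := by
    rw [walkGroup, MonoidHom.map_closure]
    refine (Subgroup.closure_le _).2 ?_
    rintro y ⟨g, ⟨m, hm, rfl⟩, rfl⟩
    refine Subgroup.subset_closure ⟨(e, true) :: (m ++ [(e, false)]), ?_, ?_⟩
    · refine .cons (Set.mem_insert _ _) (by simp) ?_
      simp only [stepLast_tt]
      exact (hm.mono (Set.subset_insert _ _)).append walk_e_ff
    · rw [gainOf_cons', gainOf_append, gainOf_single_tt, gainOf_single_ff]
      simp [MulAut.conj_apply, mul_assoc]
  have h2 : (MulAut.conj (ψ e)).toMonoidHom x ∈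
      (G.walkGroup ψ C (G.tgt e)).map (MulAut.conj (ψ e)).toMonoidHom :=
    Subgroup.mem_map_of_mem _ hx
  have h3 := h1 h2
  simpa [MulAut.conj_apply, mul_assoc] using h3

/-- S3 (cycle edge): adding an edge whose endpoints are joined by a walk `W` in `C`
adds the single generator `ψ e * gainOf ψ W` to the walk group. -/
theorem walkGroup_insert_cycle {e : E} {C : Set E} {W : List (E × Bool)}
    (hW : G.IsWalkFrom C (G.tgt e) (G.src e) W) (heC : e ∉ C) :
    G.walkGroup ψ (insert e C) (G.src e) =
      Subgroup.closure (↑(G.walkGroup ψ C (G.src e)) ∪ {ψ e * gainOf ψ W}) := by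
  set p := G.src e with hp
  set q := G.tgt e with hq
  set γ := gainOf ψ W with hγ
  set H := Subgroup.closure (↑(G.walkGroup ψ C p) ∪ {ψ e * γ}) with hH
  have hle : G.walkGroup ψ C p ≤ H := by
    conv_lhs => rw [← Subgroup.closure_eq (G.walkGroup ψ C p)]
    exact Subgroup.closure_mono Set.subset_union_left
  have hhH : ψ e * γ ∈ H := Subgroup.subset_closure (Or.inr rfl)
  apply le_antisymm
  · rw [walkGroup]
    refine (Subgroup.closure_le _).2 ?_
    rintro g ⟨l, hl, rfl⟩
    suffices Hn : ∀ n l, ecount e l ≤ n → G.IsWalkFrom (insert e C) p p l →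
        gainOf ψ l ∈ H by
      exact Hn (ecount e l) l le_rfl hl
    intro n
    induction n with
    | zero =>
        intro l hlen hwalk
        rcases hwalk.insert_split with hC | ⟨l₁, b, l₂, rfl, h₁, h₂⟩
        · exact hle (mem_walkGroup_of_walk hC)
        · exfalso
          have := ecount_append e l₁ ((e, b) :: l₂)
          rw [ecount_cons_self] at this
          omega
    | succ n ih =>
        intro l hlen hwalk
        rcases hwalk.insert_split with hC | ⟨l₁, b, l₂, rfl, h₁, h₂⟩
        · exact hle (mem_walkGroup_of_walk hC)
        · have hec : ecount e l₁ = 0 := ecount_eq_zero h₁ heC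
          have hecl : ecount e l₂ ≤ n := by
            have := ecount_append e l₁ ((e, b) :: l₂)
            rw [ecount_cons_self] at this
            omega
          cases b with
          | true =>
              simp only [stepHead_tt, stepLast_tt, ← hp, ← hq] at h₁ h₂
              have hrev : G.IsWalkFrom (insert e C) p q ((W.map stepRev).reverse) := by
                have := hW.reverse.mono (Set.subset_insert e C)
                exact this
              have hnew : G.IsWalkFrom (insert e C) p p ((W.map stepRev).reverse ++ l₂) :=
                hrev.append h₂
              have hecnew : ecount e ((W.map stepRev).reverse ++ l₂) ≤ n := by
                rw [ecount_append]
                have h0 : ecount e ((W.map stepRev).reverse) = 0 :=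
                  ecount_eq_zero hW.reverse heC
                omega
              have hind := ih _ hecnew hnew
              rw [gainOf_append, gainOf_reverse, ← hγ] at hind
              have hg1 : gainOf ψ l₁ ∈ H := hle (mem_walkGroup_of_walk h₁)
              have hgoal : gainOf ψ (l₁ ++ (e, true) :: l₂) =
                  gainOf ψ l₁ * ((ψ e * γ) * (γ⁻¹ * gainOf ψ l₂)) := by
                rw [gainOf_append, gainOf_cons', gainOf_single_tt]
                group
              rw [hgoal]
              exact mul_mem hg1 (mul_mem hhH hind)
          | false =>
              simp only [stepHead_ff, stepLast_ff, ← hp, ← hq] at h₁ h₂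
              have hind := ih _ hecl h₂
              have hcyc : gainOf ψ l₁ * γ ∈ H := by
                have hmem := mem_walkGroup_of_walk (ψ := ψ) (h₁.append hW)
                rw [gainOf_append] at hmem
                exact hle hmem
              have hgoal : gainOf ψ (l₁ ++ (e, false) :: l₂) =
                  ((gainOf ψ l₁ * γ) * (ψ e * γ)⁻¹) * gainOf ψ l₂ := by
                rw [gainOf_append, gainOf_cons', gainOf_single_ff]
                group
              rw [hgoal]
              exact mul_mem (mul_mem hcyc (inv_mem hhH)) hind
  · refine (Subgroup.closure_le _).2 (Set.union_subset ?_ ?_)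
    · exact SetLike.coe_subset_coe.2 (walkGroup_mono (Set.subset_insert _ _))
    · rw [Set.singleton_subset_iff]
      refine Subgroup.subset_closure ⟨(e, true) :: W, ?_, ?_⟩
      · refine .cons (Set.mem_insert _ _) (by simp [hp]) ?_
        simp only [stepLast_tt]
        exact hW.mono (Set.subset_insert _ _)
      · rw [gainOf_cons', gainOf_single_tt]

/-- S4 (bridge edge): adding an edge between two sides not joined in `C`. -/
theorem walkGroup_insert_bridge {e : E} {C : Set E}
    (hnr : ¬ G.Reaches C (G.tgt e) (G.src e)) (heC : e ∉ C) :
    G.walkGroup ψ (insert e C) (G.src e) =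
      Subgroup.closure (↑(G.walkGroup ψ C (G.src e)) ∪
        (fun x => ψ e * x * (ψ e)⁻¹) '' ↑(G.walkGroup ψ C (G.tgt e))) := by
  set p := G.src e with hp
  set q := G.tgt e with hq
  set H := Subgroup.closure (↑(G.walkGroup ψ C p) ∪
    (fun x => ψ e * x * (ψ e)⁻¹) '' ↑(G.walkGroup ψ C q)) with hH
  have hle : G.walkGroup ψ C p ≤ H := by
    conv_lhs => rw [← Subgroup.closure_eq (G.walkGroup ψ C p)]
    exact Subgroup.closure_mono Set.subset_union_left
  have hconjH : ∀ x ∈ G.walkGroup ψ C q, ψ e * x * (ψ e)⁻¹ ∈ H := fun x hx =>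
    Subgroup.subset_closure (Or.inr ⟨x, hx, rfl⟩)
  apply le_antisymm
  · rw [walkGroup]
    refine (Subgroup.closure_le _).2 ?_
    rintro g ⟨l, hl, rfl⟩
    suffices Hn : ∀ n l, ecount e l ≤ n → G.IsWalkFrom (insert e C) p p l →
        gainOf ψ l ∈ H by
      exact Hn (ecount e l) l le_rfl hl
    intro n
    induction n using Nat.strong_induction_on with
    | _ n ih =>
        intro l hlen hwalk
        rcases hwalk.insert_split with hC | ⟨l₁, b, l₂, rfl, h₁, h₂⟩
        · exact hle (mem_walkGroup_of_walk hC)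
        · have hec1 : ecount e l₁ = 0 := ecount_eq_zero h₁ heC
          cases b with
          | false =>
              simp only [stepHead_ff, stepLast_ff, ← hp, ← hq] at h₁ h₂
              exact absurd ⟨_, h₁.reverse⟩ hnr
          | true =>
              simp only [stepHead_tt, stepLast_tt, ← hp, ← hq] at h₁ h₂
              rcases h₂.insert_split with hC₂ | ⟨m₁, b', m₂, rfl, hm₁, hm₂⟩
              · exact absurd ⟨_, hC₂⟩ hnr
              · have hec2 : ecount e m₁ = 0 := ecount_eq_zero hm₁ heC
                cases b' with
                | true =>
                    simp only [stepHead_tt, ← hp] at hm₁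
                    exact absurd ⟨_, hm₁⟩ hnr
                | false =>
                    simp only [stepHead_ff, stepLast_ff, ← hp, ← hq] at hm₁ hm₂
                    have hecm : ecount e m₂ + 2 ≤ n := by
                      have e1 := ecount_append e l₁ ((e, true) :: (m₁ ++ (e, false) :: m₂))
                      have e2 := ecount_cons_self e true (m₁ ++ (e, false) :: m₂)
                      have e3 := ecount_append e m₁ ((e, false) :: m₂)
                      have e4 := ecount_cons_self e false m₂
                      omega
                    have hind := ih (ecount e m₂) (by omega) m₂ le_rfl hm₂
                    have hg1 : gainOf ψ l₁ ∈ H := hle (mem_walkGroup_of_walk h₁)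
                    have hg2 : ψ e * gainOf ψ m₁ * (ψ e)⁻¹ ∈ H :=
                      hconjH _ (mem_walkGroup_of_walk hm₁)
                    have hgoal : gainOf ψ (l₁ ++ (e, true) :: (m₁ ++ (e, false) :: m₂)) =
                        gainOf ψ l₁ * (ψ e * gainOf ψ m₁ * (ψ e)⁻¹) * gainOf ψ m₂ := by
                      rw [gainOf_append, gainOf_cons', gainOf_single_tt, gainOf_append,
                        gainOf_cons', gainOf_single_ff]
                      group
                    rw [hgoal]
                    exact mul_mem (mul_mem hg1 hg2) hind
  · refine (Subgroup.closure_le _).2 (Set.union_subset ?_ ?_)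
    · exact SetLike.coe_subset_coe.2 (walkGroup_mono (Set.subset_insert _ _))
    · rintro y ⟨x, hx, rfl⟩
      exact conj_walkGroup_le x hx

end Splice3

end GG

namespace GG

set_option linter.unusedSectionVars false
set_option linter.unusedVariables false

variable {V E : Type*} {G : GG V E}

section Conj
variable {Γ : Type*} [Group Γ] {ψ : E → Γ} {X : Set E} {u v w : V} {μ : Set Γ → ℝ}

theorem walkGroup_coe_conj {l} (hl : G.IsWalkFrom X u v l) :
    (G.walkGroup ψ X v : Set Γ) =
      (fun x => (gainOf ψ l)⁻¹ * x * gainOf ψ l) '' ↑(G.walkGroup ψ X u) := by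
  set γ := gainOf ψ l with hγ
  have hfun : (fun x : Γ => γ⁻¹ * x * γ) = ⇑(MulAut.conj γ⁻¹).toMonoidHom := by
    ext x; simp [MulAut.conj_apply]
  have hSv : {g : Γ | ∃ m, G.IsWalkFrom X v v m ∧ gainOf ψ m = g} =
      (fun x => γ⁻¹ * x * γ) '' {g : Γ | ∃ m, G.IsWalkFrom X u u m ∧ gainOf ψ m = g} := by
    ext g
    constructor
    · rintro ⟨m, hm, rfl⟩
      refine ⟨γ * gainOf ψ m * γ⁻¹, ⟨l ++ m ++ (l.map stepRev).reverse, ?_, ?_⟩, by group⟩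
      · exact (hl.append hm).append hl.reverse
      · rw [gainOf_append, gainOf_append, gainOf_reverse, ← hγ]
    · rintro ⟨x, ⟨m, hm, rfl⟩, rfl⟩
      refine ⟨(l.map stepRev).reverse ++ m ++ l, ?_, ?_⟩
      · exact (hl.reverse.append hm).append hl
      · rw [gainOf_append, gainOf_append, gainOf_reverse, ← hγ]
  rw [walkGroup, walkGroup, hSv, hfun, ← MonoidHom.map_closure, Subgroup.coe_map]

theorem mu_walkGroup_congr
    (hconj : ∀ (S : Set Γ) (γ : Γ), S.Nonempty → μ ((fun x => γ * x * γ⁻¹) '' S) = μ S)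
    (h : G.Reaches X u v) : μ ↑(G.walkGroup ψ X v) = μ ↑(G.walkGroup ψ X u) := by
  obtain ⟨l, hl⟩ := h
  rw [walkGroup_coe_conj hl]
  simpa using hconj ↑(G.walkGroup ψ X u) (gainOf ψ l)⁻¹ ⟨1, one_mem _⟩

end Conj

section QuotM
variable [Fintype V] [Fintype E] [DecidableEq V] [DecidableEq E]
variable {Γ : Type*} [Group Γ] {ψ : E → Γ} {μ : Set Γ → ℝ} {F : Finset E} {e : E}

theorem compRel_equivalence (F : Finset E) : Equivalence (G.compRel F) where
  refl x := ⟨[], .nil _⟩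
  symm h := Reaches.symm h
  trans h₁ h₂ := Reaches.trans h₁ h₂

noncomputable instance (F : Finset E) : Fintype (Quot (G.compRel F)) :=
  Fintype.ofFinite _

theorem quot_mk_eq_iff {x y : {x // x ∈ F}} :
    Quot.mk (G.compRel F) x = Quot.mk (G.compRel F) y ↔ G.compRel F x y := by
  constructor
  · intro h
    exact ((compRel_equivalence F).eqvGen_iff).1 (Quot.eq.1 h)
  · exact Quot.sound

theorem compCl_eq (F : Finset E) (x : E) : G.compCl F x = G.CompAt ↑F (G.src x) := rfl

/-- Whether the component `c` contains the vertex `v`. -/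
def Touches (G : GG V E) (F : Finset E) (c : Quot (G.compRel F)) (v : V) : Prop :=
  ∃ x, Quot.mk (G.compRel F) x = c ∧ G.Reaches ↑F (G.src x.1) v

theorem touches_mk {x : {x // x ∈ F}} {v : V} :
    G.Touches F (Quot.mk _ x) v ↔ G.Reaches ↑F (G.src x.1) v := by
  constructor
  · rintro ⟨y, hy, hr⟩
    exact (Reaches.symm (quot_mk_eq_iff.1 hy)).trans hr
  · intro h; exact ⟨x, rfl, h⟩

theorem touches_out {c : Quot (G.compRel F)} {v : V} (h : G.Touches F c v) :
    G.Reaches ↑F (G.src c.out.1) v := by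
  have hc : Quot.mk (G.compRel F) c.out = c := Quot.out_eq c
  rw [← hc] at h
  exact touches_mk.1 h

theorem touches_of_out {c : Quot (G.compRel F)} {v : V}
    (h : G.Reaches ↑F (G.src c.out.1) v) : G.Touches F c v :=
  ⟨c.out, Quot.out_eq c, h⟩

open Classical in
/-- The set of components of `F` touching an endpoint of `e`. -/
noncomputable def touchK (G : GG V E) (F : Finset E) (e : E) :
    Finset (Quot (G.compRel F)) :=
  Finset.univ.filter (fun c => G.Touches F c (G.src e) ∨ G.Touches F c (G.tgt e))

theorem mem_touchK {c : Quot (G.compRel F)} :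
    c ∈ G.touchK F e ↔ (G.Touches F c (G.src e) ∨ G.Touches F c (G.tgt e)) := by
  classical
  simp [touchK]

/-- The map on components induced by enlarging the edge set. -/
def qmap {F₁ F₂ : Finset E} (h : F₁ ⊆ F₂) :
    Quot (G.compRel F₁) → Quot (G.compRel F₂) :=
  Quot.lift (fun x => Quot.mk _ ⟨x.1, h x.2⟩)
    (fun a b hab => Quot.sound (Reaches.mono (Finset.coe_subset.2 h) hab))

/-- The component of the new edge `e`. -/
def ceQ (G : GG V E) (F : Finset E) (e : E) : Quot (G.compRel (insert e F)) :=
  Quot.mk _ ⟨e, Finset.mem_insert_self e F⟩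

/-- The per-component summand of `gMu`. -/
noncomputable def phi (G : GG V E) (ψ : E → Γ) (μ : Set Γ → ℝ) (F : Finset E)
    (c : Quot (G.compRel F)) : ℝ :=
  μ ↑(G.walkGroup ψ (G.compCl F c.out.1) (G.src c.out.1))

theorem gMu_eq_phi (F : Finset E) :
    G.gMu ψ μ F = ((G.vertexFinset F).card : ℝ) - (G.numComp F : ℝ) +
      ∑ᶠ c : Quot (G.compRel F), G.phi ψ μ F c := rfl

end QuotM

end GG

namespace GG

set_option linter.unusedSectionVars false
set_option linter.unusedVariables false

variable {V E : Type*} {G : GG V E}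

section Master
variable [Fintype V] [Fintype E] [DecidableEq V] [DecidableEq E]
variable {Γ : Type*} [Group Γ] {ψ : E → Γ} {μ : Set Γ → ℝ} {F : Finset E} {e : E}

theorem qmap_eq_ceQ_iff (he : e ∉ F) {c : Quot (G.compRel F)} :
    G.qmap (Finset.subset_insert e F) c = G.ceQ F e ↔ c ∈ G.touchK F e := by
  obtain ⟨x, rfl⟩ := Quot.exists_rep c
  constructor
  · intro h
    obtain ⟨l, hl⟩ := quot_mk_eq_iff.1 h
    rw [Finset.coe_insert] at hl
    by_contra hK
    rw [mem_touchK] at hK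
    push_neg at hK
    have hp : ¬ G.Reaches ↑F (G.src x.1) (G.src e) := fun hr => hK.1 (touches_mk.2 hr)
    have hq : ¬ G.Reaches ↑F (G.src x.1) (G.tgt e) := fun hr => hK.2 (touches_mk.2 hr)
    exact hp ⟨l, hl.of_insert_not_reach hp hq⟩
  · intro hK
    rw [mem_touchK] at hK
    have hr : G.Reaches ↑(insert e F) (G.src x.1) (G.src e) := by
      rw [Finset.coe_insert]
      rcases hK with h | h
      · exact Reaches.mono (Set.subset_insert _ _) (touches_mk.1 h)
      · exact (Reaches.mono (Set.subset_insert _ _) (touches_mk.1 h)).trans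
          ⟨[(e, false)], walk_e_ff⟩
    exact Quot.sound hr

theorem qmap_inj (he : e ∉ F) {c₁ c₂ : Quot (G.compRel F)} (h₁ : c₁ ∉ G.touchK F e)
    (h : G.qmap (Finset.subset_insert e F) c₁ = G.qmap (Finset.subset_insert e F) c₂) :
    c₁ = c₂ := by
  obtain ⟨x₁, rfl⟩ := Quot.exists_rep c₁
  obtain ⟨x₂, rfl⟩ := Quot.exists_rep c₂
  obtain ⟨l, hl⟩ := quot_mk_eq_iff.1 h
  rw [Finset.coe_insert] at hl
  rw [mem_touchK] at h₁
  push_neg at h₁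
  have hp : ¬ G.Reaches ↑F (G.src x₁.1) (G.src e) := fun hr => h₁.1 (touches_mk.2 hr)
  have hq : ¬ G.Reaches ↑F (G.src x₁.1) (G.tgt e) := fun hr => h₁.2 (touches_mk.2 hr)
  exact Quot.sound ⟨l, hl.of_insert_not_reach hp hq⟩

theorem qmap_surj (he : e ∉ F) (c' : Quot (G.compRel (insert e F))) :
    c' = G.ceQ F e ∨ ∃ c, c ∉ G.touchK F e ∧ G.qmap (Finset.subset_insert e F) c = c' := by
  obtain ⟨x', rfl⟩ := Quot.exists_rep c'
  by_cases hx : x'.1 = e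
  · left
    have hx' : x' = (⟨e, Finset.mem_insert_self e F⟩ : {x // x ∈ insert e F}) :=
      Subtype.ext hx
    rw [hx']
    rfl
  · have hxF : x'.1 ∈ F := by
      have := x'.2
      rw [Finset.mem_insert] at this
      tauto
    set c := Quot.mk (G.compRel F) ⟨x'.1, hxF⟩ with hc
    have hπ : G.qmap (Finset.subset_insert e F) c = Quot.mk _ x' := by
      exact congrArg (Quot.mk _) (Subtype.ext rfl)
    by_cases hcK : c ∈ G.touchK F e
    · left
      rw [← hπ]
      exact (qmap_eq_ceQ_iff he).2 hcK
    · exact Or.inr ⟨c, hcK, hπ⟩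

theorem numComp_insert (he : e ∉ F) :
    G.numComp (insert e F) + (G.touchK F e).card = G.numComp F + 1 := by
  classical
  have h1 : G.numComp (insert e F) = Fintype.card (Quot (G.compRel (insert e F))) :=
    Nat.card_eq_fintype_card
  have h2 : G.numComp F = Fintype.card (Quot (G.compRel F)) := Nat.card_eq_fintype_card
  rw [h1, h2, ← Finset.card_univ, ← Finset.card_univ]
  have h3 := Finset.card_erase_add_one (Finset.mem_univ (G.ceQ F e))
  have h4 := Finset.card_filter_add_card_filter_not
    (s := (Finset.univ : Finset (Quot (G.compRel F)))) (p := fun c => c ∈ G.touchK F e)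
  have h5 : Finset.univ.filter (fun c => c ∈ G.touchK F e) = G.touchK F e := by
    ext c; simp
  have hbij : (Finset.univ.filter (fun c => c ∉ G.touchK F e)).card =
      (Finset.univ.erase (G.ceQ F e)).card := by
    refine Finset.card_bij (fun c _ => G.qmap (Finset.subset_insert e F) c) ?_ ?_ ?_
    · intro c hcmem
      rw [Finset.mem_filter] at hcmem
      refine Finset.mem_erase.2 ⟨?_, Finset.mem_univ _⟩
      intro hcontra
      exact hcmem.2 ((qmap_eq_ceQ_iff he).1 hcontra)
    · intro c₁ h₁ c₂ h₂ h
      rw [Finset.mem_filter] at h₁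
      exact qmap_inj he h₁.2 h
    · intro c' hc'
      rw [Finset.mem_erase] at hc'
      rcases qmap_surj (G := G) he c' with h | ⟨c, hcK, hπ⟩
      · exact absurd h hc'.1
      · exact ⟨c, Finset.mem_filter.2 ⟨Finset.mem_univ _, hcK⟩, hπ⟩
  rw [h5] at h4
  omega

theorem finsum_phi_insert (he : e ∉ F)
    (hphi : ∀ c ∉ G.touchK F e,
      G.phi ψ μ (insert e F) (G.qmap (Finset.subset_insert e F) c) = G.phi ψ μ F c) :
    ∑ᶠ c' : Quot (G.compRel (insert e F)), G.phi ψ μ (insert e F) c'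
      = G.phi ψ μ (insert e F) (G.ceQ F e) +
        (∑ᶠ c : Quot (G.compRel F), G.phi ψ μ F c - ∑ c ∈ G.touchK F e, G.phi ψ μ F c) := by
  classical
  rw [finsum_eq_sum_of_fintype, finsum_eq_sum_of_fintype]
  have hsplit := Finset.add_sum_erase Finset.univ (G.phi ψ μ (insert e F))
    (Finset.mem_univ (G.ceQ F e))
  have hbij : ∑ c ∈ Finset.univ.filter (fun c => c ∉ G.touchK F e), G.phi ψ μ F c =
      ∑ c' ∈ Finset.univ.erase (G.ceQ F e), G.phi ψ μ (insert e F) c' := by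
    refine Finset.sum_bij (fun c _ => G.qmap (Finset.subset_insert e F) c) ?_ ?_ ?_ ?_
    · intro c hcmem
      rw [Finset.mem_filter] at hcmem
      refine Finset.mem_erase.2 ⟨?_, Finset.mem_univ _⟩
      intro hcontra
      exact hcmem.2 ((qmap_eq_ceQ_iff he).1 hcontra)
    · intro c₁ h₁ c₂ h₂ h
      rw [Finset.mem_filter] at h₁
      exact qmap_inj he h₁.2 h
    · intro c' hc'
      rw [Finset.mem_erase] at hc'
      rcases qmap_surj (G := G) he c' with h | ⟨c, hcK, hπ⟩
      · exact absurd h hc'.1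
      · exact ⟨c, Finset.mem_filter.2 ⟨Finset.mem_univ _, hcK⟩, hπ⟩
    · intro c hcmem
      rw [Finset.mem_filter] at hcmem
      exact (hphi c hcmem.2).symm
  have hsplit2 := Finset.sum_filter_add_sum_filter_not Finset.univ
    (fun c => c ∈ G.touchK F e) (G.phi ψ μ F)
  have h5 : Finset.univ.filter (fun c => c ∈ G.touchK F e) = G.touchK F e := by
    ext c; simp
  rw [h5] at hsplit2
  rw [← hsplit, ← hbij]
  linarith

theorem vertexFinset_insert (F : Finset E) (e : E) :
    G.vertexFinset (insert e F) = insert (G.src e) (insert (G.tgt e) (G.vertexFinset F)) := by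
  ext x
  simp only [vertexFinset, Finset.mem_union, Finset.mem_image, Finset.mem_insert]
  constructor
  · rintro (⟨f, rfl | hfF, rfl⟩ | ⟨f, rfl | hfF, rfl⟩)
    · exact Or.inl rfl
    · exact Or.inr (Or.inr (Or.inl ⟨f, hfF, rfl⟩))
    · exact Or.inr (Or.inl rfl)
    · exact Or.inr (Or.inr (Or.inr ⟨f, hfF, rfl⟩))
  · rintro (rfl | rfl | ⟨f, hf, rfl⟩ | ⟨f, hf, rfl⟩)
    · exact Or.inl ⟨e, Or.inl rfl, rfl⟩
    · exact Or.inr ⟨e, Or.inl rfl, rfl⟩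
    · exact Or.inl ⟨f, Or.inr hf, rfl⟩
    · exact Or.inr ⟨f, Or.inr hf, rfl⟩

/-- The master increment formula. -/
theorem gMu_insert_eq (he : e ∉ F)
    (hphi : ∀ c ∉ G.touchK F e,
      G.phi ψ μ (insert e F) (G.qmap (Finset.subset_insert e F) c) = G.phi ψ μ F c) :
    G.gMu ψ μ (insert e F) = G.gMu ψ μ F
      + ((G.vertexFinset (insert e F)).card : ℝ) - ((G.vertexFinset F).card : ℝ)
      + ((G.touchK F e).card : ℝ) - 1
      + G.phi ψ μ (insert e F) (G.ceQ F e) - ∑ c ∈ G.touchK F e, G.phi ψ μ F c := by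
  rw [gMu_eq_phi, gMu_eq_phi, finsum_phi_insert he hphi]
  have hM1 := numComp_insert (G := G) (F := F) (e := e) he
  have hcast : (G.numComp (insert e F) : ℝ) = (G.numComp F : ℝ) + 1 - ((G.touchK F e).card : ℝ) := by
    have := congrArg (Nat.cast : ℕ → ℝ) hM1
    push_cast at this
    linarith
  rw [hcast]
  ring

end Master

end GG

namespace GG

set_option linter.unusedSectionVars false
set_option linter.unusedVariables false

variable {V E : Type*} {G : GG V E}

section Helpers
variable [Fintype V] [Fintype E] [DecidableEq V] [DecidableEq E]
variable {Γ : Type*} [Group Γ] {ψ : E → Γ} {μ : Set Γ → ℝ} {F : Finset E} {e : E} {v : V}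

theorem mem_vertexFinset :
    v ∈ G.vertexFinset F ↔ ∃ f ∈ F, G.src f = v ∨ G.tgt f = v := by
  constructor
  · intro h
    rcases Finset.mem_union.1 h with h | h <;> obtain ⟨f, hf, rfl⟩ := Finset.mem_image.1 h
    · exact ⟨f, hf, Or.inl rfl⟩
    · exact ⟨f, hf, Or.inr rfl⟩
  · rintro ⟨f, hf, rfl | rfl⟩
    · exact Finset.mem_union_left _ (Finset.mem_image.2 ⟨f, hf, rfl⟩)
    · exact Finset.mem_union_right _ (Finset.mem_image.2 ⟨f, hf, rfl⟩)

theorem mem_vertexFinset_iff : v ∈ G.vertexFinset F ↔ v ∈ G.VSet ↑F := by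
  rw [mem_vertexFinset]
  exact ⟨fun ⟨f, hf, h⟩ => ⟨f, hf, h⟩, fun ⟨f, hf, h⟩ => ⟨f, hf, h⟩⟩

theorem touches_vertex {c : Quot (G.compRel F)} (h : G.Touches F c v) :
    v ∈ G.vertexFinset F := by
  have hr := touches_out h
  rcases hr.last_mem with rfl | hv
  · exact mem_vertexFinset.2 ⟨c.out.1, c.out.2, Or.inl rfl⟩
  · exact mem_vertexFinset_iff.2 hv

theorem touches_unique {c c' : Quot (G.compRel F)} (h : G.Touches F c v)
    (h' : G.Touches F c' v) : c = c' := by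
  rw [← Quot.out_eq c, ← Quot.out_eq c']
  exact Quot.sound ((touches_out h).trans (touches_out h').symm)

theorem touches_exists (hv : v ∈ G.vertexFinset F) : ∃ c, G.Touches F c v := by
  obtain ⟨f, hf, hend⟩ := mem_vertexFinset.1 hv
  exact ⟨Quot.mk _ ⟨f, hf⟩, touches_mk.2 (reaches_src_of_endpoint hf hend)⟩

theorem phi_eq
    (hconj : ∀ (S : Set Γ) (γ : Γ), S.Nonempty → μ ((fun x => γ * x * γ⁻¹) '' S) = μ S)
    {c : Quot (G.compRel F)} (h : G.Touches F c v) :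
    G.phi ψ μ F c = μ ↑(G.walkGroup ψ (G.CompAt ↑F v) v) := by
  have hr : G.Reaches ↑F (G.src c.out.1) v := touches_out h
  show μ ↑(G.walkGroup ψ (G.compCl F c.out.1) (G.src c.out.1)) = _
  rw [compCl_eq, compAt_congr hr]
  have hr2 : G.Reaches (G.CompAt ↑F v) (G.src c.out.1) v := hr.compAt hr.symm
  exact (mu_walkGroup_congr hconj hr2).symm

/-- Discharging the `hphi` hypothesis of `gMu_insert_eq`. -/
theorem phi_insert_eq
    (hconj : ∀ (S : Set Γ) (γ : Γ), S.Nonempty → μ ((fun x => γ * x * γ⁻¹) '' S) = μ S)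
    (he : e ∉ F) :
    ∀ c ∉ G.touchK F e,
      G.phi ψ μ (insert e F) (G.qmap (Finset.subset_insert e F) c) = G.phi ψ μ F c := by
  intro c hc
  rw [mem_touchK] at hc
  push_neg at hc
  set a := c.out with ha
  set v := G.src a.1 with hv
  have hout : Quot.mk (G.compRel F) a = c := Quot.out_eq c
  have htv : G.Touches F c v := touches_of_out (Reaches.refl G _ _)
  have hp : ¬ G.Reaches ↑F v (G.src e) := by
    intro hr
    exact hc.1 ⟨a, hout, hr⟩
  have hq : ¬ G.Reaches ↑F v (G.tgt e) := by
    intro hr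
    exact hc.2 ⟨a, hout, hr⟩
  have htv' : G.Touches (insert e F) (G.qmap (Finset.subset_insert e F) c) v := by
    rw [← hout]
    exact ⟨⟨a.1, Finset.subset_insert e F a.2⟩, rfl, Reaches.refl G _ _⟩
  rw [phi_eq hconj htv, phi_eq hconj htv']
  have hset : G.CompAt ↑(insert e F) v = G.CompAt ↑F v := by
    ext f
    constructor
    · rintro ⟨hf, l, hl⟩
      rw [Finset.coe_insert] at hl
      have hl' := hl.of_insert_not_reach hp hq
      have hfF : f ∈ (↑F : Set E) := by
        have h2 := Finset.mem_insert.1 (Finset.mem_coe.1 hf)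
        rcases h2 with rfl | hfF
        · exact absurd ⟨l, hl'⟩ hp
        · exact hfF
      exact ⟨hfF, l, hl'⟩
    · rintro ⟨hf, hr⟩
      exact ⟨Finset.mem_coe.2 (Finset.mem_insert_of_mem (Finset.mem_coe.1 hf)),
        hr.mono (Finset.coe_subset.2 (Finset.subset_insert e F))⟩
  rw [hset]

/-- Components of a disjoint union: the walk group only sees one side. -/
theorem walkGroup_union_sep {C₁ C₂ : Set E} {u : V}
    (hdisj : ∀ x, x ∈ G.VSet C₁ → x ∉ G.VSet C₂) (hu : u ∉ G.VSet C₂) :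
    G.walkGroup ψ (C₁ ∪ C₂) u = G.walkGroup ψ C₁ u := by
  refine le_antisymm ?_ (walkGroup_mono Set.subset_union_left)
  rw [walkGroup]
  refine (Subgroup.closure_le _).2 ?_
  rintro g ⟨l, hl, rfl⟩
  exact mem_walkGroup_of_walk (hl.of_union_sep hdisj hu)

/-- Configs a, b: the new component is `{e}` alone. -/
theorem compAt_insert_isolated {C : Set E}
    (hp : G.src e ∉ G.VSet C) (hq : G.tgt e ∉ G.VSet C) :
    G.CompAt (insert e C) (G.src e) = {e} := by
  ext f
  constructor
  · rintro ⟨hf, l, hl⟩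
    have hfe : f = e := by
      rcases Set.mem_insert_iff.1 hf with rfl | hfC
      · rfl
      · exfalso
        have hsrcf : G.src f ∈ G.VSet C := ⟨f, hfC, Or.inl rfl⟩
        rcases reaches_insert_cases hl with h | ⟨h1, h2⟩ | ⟨h1, h2⟩
        · exact hp (h.eq_of_not_mem hp ▸ hsrcf)
        · exact hq (h2.eq_of_not_mem hq ▸ hsrcf)
        · exact hp (h2.eq_of_not_mem hp ▸ hsrcf)
    exact hfe ▸ rfl
  · rintro rfl
    exact ⟨Set.mem_insert _ _, Reaches.refl G _ _⟩

/-- Config c: pendant attachment. -/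
theorem compAt_insert_pendant {C : Set E} {r o : V}
    (hor : (G.src e = r ∧ G.tgt e = o) ∨ (G.src e = o ∧ G.tgt e = r))
    (ho : o ∉ G.VSet C) (hro : o ≠ r) :
    G.CompAt (insert e C) r = insert e (G.CompAt C r) := by
  ext f
  constructor
  · rintro ⟨hf, l, hl⟩
    rcases Set.mem_insert_iff.1 hf with rfl | hfC
    · exact Set.mem_insert _ _
    · have hsrcf : G.src f ∈ G.VSet C := ⟨f, hfC, Or.inl rfl⟩
      have hreach : G.Reaches C r (G.src f) := by
        rcases reaches_insert_cases hl with h | ⟨h1, h2⟩ | ⟨h1, h2⟩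
        · exact h
        · rcases hor with ⟨he1, he2⟩ | ⟨he1, he2⟩
          · rw [he2] at h2
            exact absurd (h2.eq_of_not_mem ho ▸ hsrcf) ho
          · rw [he1] at h1
            rcases h1.last_mem with h | h
            · exact absurd h hro
            · exact absurd h ho
        · rcases hor with ⟨he1, he2⟩ | ⟨he1, he2⟩
          · rw [he2] at h1
            rcases h1.last_mem with h | h
            · exact absurd h hro
            · exact absurd h ho
          · rw [he1] at h2
            exact absurd (h2.eq_of_not_mem ho ▸ hsrcf) ho
      exact Set.mem_insert_of_mem _ ⟨hfC, hreach⟩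
  · intro hf
    rcases Set.mem_insert_iff.1 hf with hfe | ⟨hfC, hr⟩
    · rw [hfe]
      refine ⟨Set.mem_insert _ _, ?_⟩
      rcases hor with ⟨he1, he2⟩ | ⟨he1, he2⟩
      · exact he1 ▸ Reaches.refl G _ _
      · rw [← he2]
        exact ⟨[(e, false)], walk_e_ff⟩
    · exact ⟨Set.mem_insert_of_mem _ hfC, hr.mono (Set.subset_insert _ _)⟩

/-- Config d: endpoints already connected. -/
theorem compAt_insert_connected {C : Set E}
    (hqp : G.Reaches C (G.tgt e) (G.src e)) :
    G.CompAt (insert e C) (G.src e) = insert e (G.CompAt C (G.src e)) := by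
  ext f
  constructor
  · rintro ⟨hf, l, hl⟩
    rcases Set.mem_insert_iff.1 hf with rfl | hfC
    · exact Set.mem_insert _ _
    · exact Set.mem_insert_of_mem _ ⟨hfC, reaches_of_insert_connected hqp hl⟩
  · intro hf
    rcases Set.mem_insert_iff.1 hf with rfl | ⟨hfC, hr⟩
    · exact ⟨Set.mem_insert _ _, Reaches.refl G _ _⟩
    · exact ⟨Set.mem_insert_of_mem _ hfC, hr.mono (Set.subset_insert _ _)⟩

/-- Config e: bridge between two components. -/
theorem compAt_insert_bridge {C : Set E}
    (hnr : ¬ G.Reaches C (G.tgt e) (G.src e)) :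
    G.CompAt (insert e C) (G.src e) =
      insert e (G.CompAt C (G.src e) ∪ G.CompAt C (G.tgt e)) := by
  ext f
  constructor
  · rintro ⟨hf, l, hl⟩
    rcases Set.mem_insert_iff.1 hf with rfl | hfC
    · exact Set.mem_insert _ _
    · rcases reaches_insert_cases hl with h | ⟨h1, h2⟩ | ⟨h1, h2⟩
      · exact Set.mem_insert_of_mem _ (Or.inl ⟨hfC, h⟩)
      · exact Set.mem_insert_of_mem _ (Or.inr ⟨hfC, h2⟩)
      · exact absurd h1.symm hnr
  · intro hf
    rcases Set.mem_insert_iff.1 hf with rfl | hf2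
    · exact ⟨Set.mem_insert _ _, Reaches.refl G _ _⟩
    · rcases hf2 with ⟨hfC, hr⟩ | ⟨hfC, hr⟩
      · exact ⟨Set.mem_insert_of_mem _ hfC, hr.mono (Set.subset_insert _ _)⟩
      · refine ⟨Set.mem_insert_of_mem _ hfC, ?_⟩
        have h1 : G.Reaches (insert e C) (G.src e) (G.tgt e) := ⟨[(e, true)], walk_e_tt⟩
        exact h1.trans (hr.mono (Set.subset_insert _ _))

theorem vset_compAt_disjoint {C : Set E}
    (hnr : ¬ G.Reaches C (G.tgt e) (G.src e)) :
    ∀ x, x ∈ G.VSet (G.CompAt C (G.src e)) → x ∉ G.VSet (G.CompAt C (G.tgt e)) := by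
  intro x hx hy
  have h1 : G.Reaches C (G.src e) x := reaches_of_mem_VSet_compAt hx
  have h2 : G.Reaches C (G.tgt e) x := reaches_of_mem_VSet_compAt hy
  exact hnr (h2.trans h1.symm)

end Helpers

end GG

namespace GG

set_option linter.unusedSectionVars false
set_option linter.unusedVariables false

variable {V E : Type*} {G : GG V E}

section Configs
variable [Fintype V] [Fintype E] [DecidableEq V] [DecidableEq E]
variable {Γ : Type*} [Group Γ] {ψ : E → Γ} {μ : Set Γ → ℝ} {F : Finset E} {e : E} {v : V}

theorem touches_ceQ_src : G.Touches (insert e F) (G.ceQ F e) (G.src e) :=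
  ⟨⟨e, Finset.mem_insert_self e F⟩, rfl, Reaches.refl G _ _⟩

theorem touches_ceQ_tgt : G.Touches (insert e F) (G.ceQ F e) (G.tgt e) := by
  refine ⟨⟨e, Finset.mem_insert_self e F⟩, rfl, ?_⟩
  rw [Finset.coe_insert]
  exact ⟨[(e, true)], walk_e_tt⟩

theorem touchK_empty (hp : G.src e ∉ G.vertexFinset F) (hq : G.tgt e ∉ G.vertexFinset F) :
    G.touchK F e = ∅ := by
  refine Finset.eq_empty_iff_forall_notMem.2 (fun c hc => ?_)
  rw [mem_touchK] at hc
  rcases hc with h | h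
  · exact hp (touches_vertex h)
  · exact hq (touches_vertex h)

theorem touchK_single_d (hq2p : G.Reaches ↑F (G.tgt e) (G.src e))
    (hp : G.src e ∈ G.vertexFinset F) :
    ∃ c₀, G.touchK F e = {c₀} ∧ G.Touches F c₀ (G.src e) := by
  obtain ⟨c₀, hc₀⟩ := touches_exists hp
  refine ⟨c₀, ?_, hc₀⟩
  ext c
  rw [mem_touchK, Finset.mem_singleton]
  constructor
  · rintro (h | h)
    · exact touches_unique h hc₀
    · have h2 : G.Touches F c (G.src e) := ⟨c.out, Quot.out_eq c, (touches_out h).trans hq2p⟩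
      exact touches_unique h2 hc₀
  · rintro rfl
    exact Or.inl hc₀

theorem touchK_single_c {r o : V}
    (hor : (G.src e = r ∧ G.tgt e = o) ∨ (G.src e = o ∧ G.tgt e = r))
    (hr : r ∈ G.vertexFinset F) (ho : o ∉ G.vertexFinset F) :
    ∃ c₀, G.touchK F e = {c₀} ∧ G.Touches F c₀ r := by
  obtain ⟨c₀, hc₀⟩ := touches_exists hr
  refine ⟨c₀, ?_, hc₀⟩
  ext c
  rw [mem_touchK, Finset.mem_singleton]
  constructor
  · rintro (h | h)
    · rcases hor with ⟨he1, he2⟩ | ⟨he1, he2⟩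
      · rw [he1] at h; exact touches_unique h hc₀
      · rw [he1] at h; exact absurd (touches_vertex h) ho
    · rcases hor with ⟨he1, he2⟩ | ⟨he1, he2⟩
      · rw [he2] at h; exact absurd (touches_vertex h) ho
      · rw [he2] at h; exact touches_unique h hc₀
  · rintro rfl
    rcases hor with ⟨he1, he2⟩ | ⟨he1, he2⟩
    · exact Or.inl (he1 ▸ hc₀)
    · exact Or.inr (he2 ▸ hc₀)

open Classical in
theorem touchK_pair_e (hnr : ¬ G.Reaches ↑F (G.tgt e) (G.src e))
    (hp : G.src e ∈ G.vertexFinset F) (hq : G.tgt e ∈ G.vertexFinset F) :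
    ∃ cp cq, cp ≠ cq ∧ G.touchK F e = {cp, cq} ∧
      G.Touches F cp (G.src e) ∧ G.Touches F cq (G.tgt e) := by
  obtain ⟨cp, hcp⟩ := touches_exists hp
  obtain ⟨cq, hcq⟩ := touches_exists hq
  have hne : cp ≠ cq := by
    rintro rfl
    exact hnr ((touches_out hcq).symm.trans (touches_out hcp))
  refine ⟨cp, cq, hne, ?_, hcp, hcq⟩
  ext c
  rw [mem_touchK, Finset.mem_insert, Finset.mem_singleton]
  constructor
  · rintro (h | h)
    · exact Or.inl (touches_unique h hcp)
    · exact Or.inr (touches_unique h hcq)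
  · rintro (rfl | rfl)
    · exact Or.inl hcp
    · exact Or.inr hcq

theorem e_not_mem_coe (he : e ∉ F) : e ∉ (↑F : Set E) := fun h => he (Finset.mem_coe.1 h)

/-- Config a increment. -/
theorem gMu_insert_a
    (hconj : ∀ (S : Set Γ) (γ : Γ), S.Nonempty → μ ((fun x => γ * x * γ⁻¹) '' S) = μ S)
    (he : e ∉ F) (hpq : G.src e ≠ G.tgt e)
    (hp : G.src e ∉ G.vertexFinset F) (hq : G.tgt e ∉ G.vertexFinset F) :
    G.gMu ψ μ (insert e F) = G.gMu ψ μ F + 1 + μ ↑(G.walkGroup ψ {e} (G.src e)) := by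
  have hK : G.touchK F e = ∅ := touchK_empty hp hq
  rw [gMu_insert_eq he (phi_insert_eq hconj he), hK]
  have hv : (G.vertexFinset (insert e F)).card = (G.vertexFinset F).card + 2 := by
    rw [vertexFinset_insert, Finset.card_insert_of_notMem, Finset.card_insert_of_notMem hq]
    simp [Finset.mem_insert, hpq, hp]
  have hcomp : G.CompAt ↑(insert e F) (G.src e) = {e} := by
    rw [Finset.coe_insert]
    exact compAt_insert_isolated (fun h => hp (mem_vertexFinset_iff.2 h))
      (fun h => hq (mem_vertexFinset_iff.2 h))
  have hphi' : G.phi ψ μ (insert e F) (G.ceQ F e) = μ ↑(G.walkGroup ψ {e} (G.src e)) := by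
    rw [phi_eq hconj touches_ceQ_src, hcomp]
  rw [hv, hphi']
  simp only [Finset.card_empty, Finset.sum_empty]
  push_cast
  ring

/-- Config b increment (loop at an isolated vertex). -/
theorem gMu_insert_b
    (hconj : ∀ (S : Set Γ) (γ : Γ), S.Nonempty → μ ((fun x => γ * x * γ⁻¹) '' S) = μ S)
    (he : e ∉ F) (hloop : G.tgt e = G.src e) (hp : G.src e ∉ G.vertexFinset F) :
    G.gMu ψ μ (insert e F) = G.gMu ψ μ F + μ ↑(G.walkGroup ψ {e} (G.src e)) := by
  have hq : G.tgt e ∉ G.vertexFinset F := by rw [hloop]; exact hp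
  have hK : G.touchK F e = ∅ := touchK_empty hp hq
  rw [gMu_insert_eq he (phi_insert_eq hconj he), hK]
  have hv : (G.vertexFinset (insert e F)).card = (G.vertexFinset F).card + 1 := by
    rw [vertexFinset_insert, hloop, Finset.insert_idem, Finset.card_insert_of_notMem hp]
  have hcomp : G.CompAt ↑(insert e F) (G.src e) = {e} := by
    rw [Finset.coe_insert]
    exact compAt_insert_isolated (fun h => hp (mem_vertexFinset_iff.2 h))
      (fun h => hq (mem_vertexFinset_iff.2 h))
  have hphi' : G.phi ψ μ (insert e F) (G.ceQ F e) = μ ↑(G.walkGroup ψ {e} (G.src e)) := by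
    rw [phi_eq hconj touches_ceQ_src, hcomp]
  rw [hv, hphi']
  simp only [Finset.card_empty, Finset.sum_empty]
  push_cast
  ring

/-- Config c increment (pendant attachment). -/
theorem gMu_insert_c
    (hconj : ∀ (S : Set Γ) (γ : Γ), S.Nonempty → μ ((fun x => γ * x * γ⁻¹) '' S) = μ S)
    (he : e ∉ F) {r o : V}
    (hor : (G.src e = r ∧ G.tgt e = o) ∨ (G.src e = o ∧ G.tgt e = r))
    (hr : r ∈ G.vertexFinset F) (ho : o ∉ G.vertexFinset F) (hro : o ≠ r) :
    G.gMu ψ μ (insert e F) = G.gMu ψ μ F + 1 := by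
  obtain ⟨c₀, hK, hc₀⟩ := touchK_single_c hor hr ho
  rw [gMu_insert_eq he (phi_insert_eq hconj he), hK]
  have hv : (G.vertexFinset (insert e F)).card = (G.vertexFinset F).card + 1 := by
    rcases hor with ⟨he1, he2⟩ | ⟨he1, he2⟩
    · rw [vertexFinset_insert, he1, he2,
        Finset.insert_eq_self.2 (Finset.mem_insert_of_mem hr),
        Finset.card_insert_of_notMem ho]
    · rw [vertexFinset_insert, he1, he2, Finset.insert_eq_self.2 hr,
        Finset.card_insert_of_notMem ho]
  have hcomp : G.CompAt ↑(insert e F) r = insert e (G.CompAt ↑F r) := by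
    rw [Finset.coe_insert]
    exact compAt_insert_pendant hor (fun h => ho (mem_vertexFinset_iff.2 h)) hro
  have htc : G.Touches (insert e F) (G.ceQ F e) r := by
    rcases hor with ⟨he1, he2⟩ | ⟨he1, he2⟩
    · exact he1 ▸ touches_ceQ_src
    · exact he2 ▸ touches_ceQ_tgt
  have hpend : G.walkGroup ψ (insert e (G.CompAt ↑F r)) r = G.walkGroup ψ (G.CompAt ↑F r) r :=
    walkGroup_insert_pendant hor
      (fun h => ho (mem_vertexFinset_iff.2 (VSet_compAt_subset _ _ h))) hro
      (fun h => (e_not_mem_coe he) (compAt_subset _ _ h))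
  have hphi' : G.phi ψ μ (insert e F) (G.ceQ F e) = μ ↑(G.walkGroup ψ (G.CompAt ↑F r) r) := by
    rw [phi_eq hconj htc, hcomp, hpend]
  have hphi0 : G.phi ψ μ F c₀ = μ ↑(G.walkGroup ψ (G.CompAt ↑F r) r) := phi_eq hconj hc₀
  rw [hv, hphi', Finset.sum_singleton, hphi0, Finset.card_singleton]
  push_cast
  ring

/-- Config d increment (cycle edge). -/
theorem gMu_insert_d
    (hconj : ∀ (S : Set Γ) (γ : Γ), S.Nonempty → μ ((fun x => γ * x * γ⁻¹) '' S) = μ S)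
    (hclos : ∀ S : Set Γ, S.Nonempty → μ ↑(Subgroup.closure S) = μ S)
    (he : e ∉ F) (hq2p : G.Reaches ↑F (G.tgt e) (G.src e)) (hp : G.src e ∈ G.vertexFinset F)
    {W : List (E × Bool)} (hW : G.IsWalkFrom (G.CompAt ↑F (G.src e)) (G.tgt e) (G.src e) W) :
    G.gMu ψ μ (insert e F) = G.gMu ψ μ F
      + μ (↑(G.walkGroup ψ (G.CompAt ↑F (G.src e)) (G.src e)) ∪ {ψ e * gainOf ψ W})
      - μ ↑(G.walkGroup ψ (G.CompAt ↑F (G.src e)) (G.src e)) := by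
  obtain ⟨c₀, hK, hc₀⟩ := touchK_single_d hq2p hp
  rw [gMu_insert_eq he (phi_insert_eq hconj he), hK]
  have hq : G.tgt e ∈ G.vertexFinset F := by
    rcases hq2p.symm.last_mem with h | h
    · rw [h]; exact hp
    · exact mem_vertexFinset_iff.2 h
  have hv : (G.vertexFinset (insert e F)).card = (G.vertexFinset F).card := by
    rw [vertexFinset_insert, Finset.insert_eq_self.2 hq, Finset.insert_eq_self.2 hp]
  have hcomp : G.CompAt ↑(insert e F) (G.src e) = insert e (G.CompAt ↑F (G.src e)) := by
    rw [Finset.coe_insert]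
    exact compAt_insert_connected hq2p
  have heC : e ∉ G.CompAt ↑F (G.src e) := fun h => (e_not_mem_coe he) (compAt_subset _ _ h)
  have hcyc := walkGroup_insert_cycle (G := G) (ψ := ψ) hW heC
  have hne : (↑(G.walkGroup ψ (G.CompAt ↑F (G.src e)) (G.src e)) ∪
      {ψ e * gainOf ψ W} : Set Γ).Nonempty :=
    ⟨1, Or.inl (SetLike.mem_coe.2 (one_mem _))⟩
  have hphi' : G.phi ψ μ (insert e F) (G.ceQ F e)
      = μ (↑(G.walkGroup ψ (G.CompAt ↑F (G.src e)) (G.src e)) ∪ {ψ e * gainOf ψ W}) := by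
    rw [phi_eq hconj touches_ceQ_src, hcomp, hcyc, hclos _ hne]
  have hphi0 : G.phi ψ μ F c₀ =
      μ ↑(G.walkGroup ψ (G.CompAt ↑F (G.src e)) (G.src e)) := phi_eq hconj hc₀
  rw [hv, hphi', Finset.sum_singleton, hphi0, Finset.card_singleton]
  push_cast
  ring

/-- Config e increment (bridge edge). -/
theorem gMu_insert_e
    (hconj : ∀ (S : Set Γ) (γ : Γ), S.Nonempty → μ ((fun x => γ * x * γ⁻¹) '' S) = μ S)
    (hclos : ∀ S : Set Γ, S.Nonempty → μ ↑(Subgroup.closure S) = μ S)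
    (he : e ∉ F) (hnr : ¬ G.Reaches ↑F (G.tgt e) (G.src e))
    (hp : G.src e ∈ G.vertexFinset F) (hq : G.tgt e ∈ G.vertexFinset F) :
    G.gMu ψ μ (insert e F) = G.gMu ψ μ F + 1
      + μ (↑(G.walkGroup ψ (G.CompAt ↑F (G.src e)) (G.src e)) ∪
          (fun x => ψ e * x * (ψ e)⁻¹) '' ↑(G.walkGroup ψ (G.CompAt ↑F (G.tgt e)) (G.tgt e)))
      - μ ↑(G.walkGroup ψ (G.CompAt ↑F (G.src e)) (G.src e))
      - μ ↑(G.walkGroup ψ (G.CompAt ↑F (G.tgt e)) (G.tgt e)) := by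
  classical
  obtain ⟨cp, cq, hnecc, hK, hcp, hcq⟩ := touchK_pair_e hnr hp hq
  rw [gMu_insert_eq he (phi_insert_eq hconj he), hK]
  have hv : (G.vertexFinset (insert e F)).card = (G.vertexFinset F).card := by
    rw [vertexFinset_insert, Finset.insert_eq_self.2 hq, Finset.insert_eq_self.2 hp]
  have hcomp : G.CompAt ↑(insert e F) (G.src e) =
      insert e (G.CompAt ↑F (G.src e) ∪ G.CompAt ↑F (G.tgt e)) := by
    rw [Finset.coe_insert]
    exact compAt_insert_bridge hnr
  have hsub : G.CompAt ↑F (G.src e) ∪ G.CompAt ↑F (G.tgt e) ⊆ (↑F : Set E) :=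
    Set.union_subset (compAt_subset _ _) (compAt_subset _ _)
  have hnr' : ¬ G.Reaches (G.CompAt ↑F (G.src e) ∪ G.CompAt ↑F (G.tgt e))
      (G.tgt e) (G.src e) := fun h => hnr (h.mono hsub)
  have heC : e ∉ G.CompAt ↑F (G.src e) ∪ G.CompAt ↑F (G.tgt e) :=
    fun h => (e_not_mem_coe he) (hsub h)
  have hbr := walkGroup_insert_bridge (G := G) (ψ := ψ) hnr' heC
  have hdisj := vset_compAt_disjoint (G := G) hnr
  have hup : G.src e ∉ G.VSet (G.CompAt ↑F (G.tgt e)) :=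
    fun h => hnr (reaches_of_mem_VSet_compAt h)
  have huq : G.tgt e ∉ G.VSet (G.CompAt ↑F (G.src e)) :=
    fun h => hnr ((reaches_of_mem_VSet_compAt h).symm)
  have hWp : G.walkGroup ψ (G.CompAt ↑F (G.src e) ∪ G.CompAt ↑F (G.tgt e)) (G.src e) =
      G.walkGroup ψ (G.CompAt ↑F (G.src e)) (G.src e) :=
    walkGroup_union_sep hdisj hup
  have hWq : G.walkGroup ψ (G.CompAt ↑F (G.src e) ∪ G.CompAt ↑F (G.tgt e)) (G.tgt e) =
      G.walkGroup ψ (G.CompAt ↑F (G.tgt e)) (G.tgt e) := by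
    rw [Set.union_comm]
    exact walkGroup_union_sep (fun x hx hy => hdisj x hy hx) huq
  have hne2 : (↑(G.walkGroup ψ (G.CompAt ↑F (G.src e)) (G.src e)) ∪
      (fun x => ψ e * x * (ψ e)⁻¹) '' ↑(G.walkGroup ψ (G.CompAt ↑F (G.tgt e)) (G.tgt e)) :
        Set Γ).Nonempty :=
    ⟨1, Or.inl (SetLike.mem_coe.2 (one_mem _))⟩
  have hphi' : G.phi ψ μ (insert e F) (G.ceQ F e)
      = μ (↑(G.walkGroup ψ (G.CompAt ↑F (G.src e)) (G.src e)) ∪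
          (fun x => ψ e * x * (ψ e)⁻¹) '' ↑(G.walkGroup ψ (G.CompAt ↑F (G.tgt e)) (G.tgt e))) := by
    rw [phi_eq hconj touches_ceQ_src, hcomp, hbr, hWp, hWq, hclos _ hne2]
  have hp0 : G.phi ψ μ F cp = μ ↑(G.walkGroup ψ (G.CompAt ↑F (G.src e)) (G.src e)) :=
    phi_eq hconj hcp
  have hq0 : G.phi ψ μ F cq = μ ↑(G.walkGroup ψ (G.CompAt ↑F (G.tgt e)) (G.tgt e)) :=
    phi_eq hconj hcq
  rw [hv, hphi', Finset.sum_pair hnecc, hp0, hq0, Finset.card_pair hnecc]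
  push_cast
  ring

end Configs

end GG

namespace GG

set_option linter.unusedSectionVars false
set_option linter.unusedVariables false

variable {V E : Type*} {G : GG V E}

section Mono1
variable [Fintype V] [Fintype E] [DecidableEq V] [DecidableEq E]
variable {Γ : Type*} [Group Γ] {ψ : E → Γ} {μ : Set Γ → ℝ} {F : Finset E} {e : E} {v : V}

theorem compAt_mono {X Y : Set E} (h : X ⊆ Y) : G.CompAt X v ⊆ G.CompAt Y v :=
  fun f hf => ⟨h hf.1, hf.2.mono h⟩

theorem vertexFinset_mono {F₁ F₂ : Finset E} (h : F₁ ⊆ F₂) :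
    G.vertexFinset F₁ ⊆ G.vertexFinset F₂ := by
  intro x hx
  obtain ⟨f, hf, hend⟩ := mem_vertexFinset.1 hx
  exact mem_vertexFinset.2 ⟨f, h hf, hend⟩

theorem psi_mem_walkGroup_loop (hloop : G.tgt e = G.src e) :
    ψ e ∈ G.walkGroup ψ {e} (G.src e) := by
  refine Subgroup.subset_closure ⟨[(e, true)], ?_, by simp⟩
  have h1 := isWalkFrom_single (G := G) (X := ({e} : Set E)) (s := ((e : E), true)) rfl
  rw [stepHead_tt, stepLast_tt, hloop] at h1
  exact h1

/-- A walk in `F` from `tgt e` to `src e`, living in the component at `src e`. -/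
theorem exists_walk_compAt (h : G.Reaches ↑F (G.tgt e) (G.src e)) :
    ∃ W, G.IsWalkFrom (G.CompAt ↑F (G.src e)) (G.tgt e) (G.src e) W := by
  obtain ⟨W, hW⟩ := h
  exact ⟨W, hW.compAt ((Reaches.symm ⟨W, hW⟩))⟩

/-- Monotonicity in a single edge. -/
theorem gMu_insert_nonneg
    (hnn : ∀ S : Set Γ, 0 ≤ μ S)
    (hmono : ∀ S T : Set Γ, S ⊆ T → μ S ≤ μ T)
    (hclos : ∀ S : Set Γ, S.Nonempty → μ ↑(Subgroup.closure S) = μ S)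
    (hconj : ∀ (S : Set Γ) (γ : Γ), S.Nonempty → μ ((fun x => γ * x * γ⁻¹) '' S) = μ S)
    (hμ1 : ∀ S : Set Γ, μ S ≤ 1)
    (he : e ∉ F) : G.gMu ψ μ F ≤ G.gMu ψ μ (insert e F) := by
  by_cases hp : G.src e ∈ G.vertexFinset F
  · by_cases hq : G.tgt e ∈ G.vertexFinset F
    · by_cases hcon : G.Reaches ↑F (G.tgt e) (G.src e)
      · obtain ⟨W, hW⟩ := exists_walk_compAt hcon
        rw [gMu_insert_d hconj hclos he hcon hp hW]
        have h1 := hmono ↑(G.walkGroup ψ (G.CompAt ↑F (G.src e)) (G.src e))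
          (↑(G.walkGroup ψ (G.CompAt ↑F (G.src e)) (G.src e)) ∪ {ψ e * gainOf ψ W})
          Set.subset_union_left
        linarith
      · rw [gMu_insert_e hconj hclos he hcon hp hq]
        have h1 := hmono ↑(G.walkGroup ψ (G.CompAt ↑F (G.src e)) (G.src e))
          (↑(G.walkGroup ψ (G.CompAt ↑F (G.src e)) (G.src e)) ∪
            (fun x => ψ e * x * (ψ e)⁻¹) '' ↑(G.walkGroup ψ (G.CompAt ↑F (G.tgt e)) (G.tgt e)))
          Set.subset_union_left
        have h2 := hμ1 ↑(G.walkGroup ψ (G.CompAt ↑F (G.tgt e)) (G.tgt e))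
        linarith
    · have hro : G.tgt e ≠ G.src e := fun h => hq (h ▸ hp)
      rw [gMu_insert_c hconj he (Or.inl ⟨rfl, rfl⟩) hp hq hro]
      linarith
  · by_cases hq : G.tgt e ∈ G.vertexFinset F
    · have hro : G.src e ≠ G.tgt e := fun h => hp (h ▸ hq)
      rw [gMu_insert_c hconj he (Or.inr ⟨rfl, rfl⟩) hq hp hro]
      linarith
    · by_cases hloop : G.tgt e = G.src e
      · rw [gMu_insert_b hconj he hloop hp]
        have := hnn ↑(G.walkGroup ψ {e} (G.src e))
        linarith
      · have hpq : G.src e ≠ G.tgt e := fun h => hloop h.symm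
        rw [gMu_insert_a hconj he hpq hp hq]
        have := hnn ↑(G.walkGroup ψ {e} (G.src e))
        linarith

end Mono1

end GG

namespace GG

set_option linter.unusedSectionVars false
set_option linter.unusedVariables false

variable {V E : Type*} {G : GG V E}

section DR
variable [Fintype V] [Fintype E] [DecidableEq V] [DecidableEq E]
variable {Γ : Type*} [Group Γ] {ψ : E → Γ} {μ : Set Γ → ℝ} {e : E}

/-- Diminishing returns for a single edge. -/
theorem gMu_insert_DR
    (hnn : ∀ S : Set Γ, 0 ≤ μ S)
    (hmono : ∀ S T : Set Γ, S ⊆ T → μ S ≤ μ T)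
    (hsubm : ∀ S T : Set Γ, μ (S ∪ T) + μ (S ∩ T) ≤ μ S + μ T)
    (hclos : ∀ S : Set Γ, S.Nonempty → μ ↑(Subgroup.closure S) = μ S)
    (hconj : ∀ (S : Set Γ) (γ : Γ), S.Nonempty → μ ((fun x => γ * x * γ⁻¹) '' S) = μ S)
    (hμ1 : ∀ S : Set Γ, μ S ≤ 1)
    {X Y : Finset E} (hXY : X ⊆ Y) (he : e ∉ Y) :
    G.gMu ψ μ (insert e Y) - G.gMu ψ μ Y ≤ G.gMu ψ μ (insert e X) - G.gMu ψ μ X := by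
  have heX : e ∉ X := fun h => he (hXY h)
  have hsubc : (↑X : Set E) ⊆ (↑Y : Set E) := Finset.coe_subset.2 hXY
  by_cases hpY : G.src e ∈ G.vertexFinset Y
  · by_cases hqY : G.tgt e ∈ G.vertexFinset Y
    · by_cases hconY : G.Reaches ↑Y (G.tgt e) (G.src e)
      · -- Case A : Y config d
        by_cases hconX : G.Reaches ↑X (G.tgt e) (G.src e)
        · by_cases hpX : G.src e ∈ G.vertexFinset X
          · -- X config d, common W
            obtain ⟨W, hWX⟩ := exists_walk_compAt (F := X) hconX
            have hWY : G.IsWalkFrom (G.CompAt ↑Y (G.src e)) (G.tgt e) (G.src e) W :=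
              ((hWX.mono (compAt_subset _ _)).mono hsubc).compAt hconY.symm
            rw [gMu_insert_d hconj hclos he hconY hpY hWY,
              gMu_insert_d hconj hclos heX hconX hpX hWX]
            have hAXY : (↑(G.walkGroup ψ (G.CompAt ↑X (G.src e)) (G.src e)) : Set Γ) ⊆
                ↑(G.walkGroup ψ (G.CompAt ↑Y (G.src e)) (G.src e)) :=
              SetLike.coe_subset_coe.2 (walkGroup_mono (compAt_mono hsubc))
            have hunion : (↑(G.walkGroup ψ (G.CompAt ↑Y (G.src e)) (G.src e)) : Set Γ) ∪
                (↑(G.walkGroup ψ (G.CompAt ↑X (G.src e)) (G.src e)) ∪ {ψ e * gainOf ψ W}) =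
                ↑(G.walkGroup ψ (G.CompAt ↑Y (G.src e)) (G.src e)) ∪ {ψ e * gainOf ψ W} := by
              rw [← Set.union_assoc, Set.union_eq_self_of_subset_right hAXY]
            have hsub1 := hsubm ↑(G.walkGroup ψ (G.CompAt ↑Y (G.src e)) (G.src e))
              (↑(G.walkGroup ψ (G.CompAt ↑X (G.src e)) (G.src e)) ∪ {ψ e * gainOf ψ W})
            rw [hunion] at hsub1
            have hint : μ ↑(G.walkGroup ψ (G.CompAt ↑X (G.src e)) (G.src e)) ≤
                μ (↑(G.walkGroup ψ (G.CompAt ↑Y (G.src e)) (G.src e)) ∩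
                  (↑(G.walkGroup ψ (G.CompAt ↑X (G.src e)) (G.src e)) ∪ {ψ e * gainOf ψ W})) :=
              hmono _ _ (Set.subset_inter hAXY Set.subset_union_left)
            linarith
          · -- X isolated loop
            have hloop : G.tgt e = G.src e :=
              hconX.symm.eq_of_not_mem (fun hh => hpX (mem_vertexFinset_iff.2 hh))
            rw [gMu_insert_b hconj heX hloop hpX]
            have hWY : G.IsWalkFrom (G.CompAt ↑Y (G.src e)) (G.tgt e) (G.src e) [] := by
              rw [hloop]; exact .nil _
            rw [gMu_insert_d hconj hclos he hconY hpY hWY]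
            have hgain : ψ e * gainOf ψ ([] : List (E × Bool)) = ψ e := by
              simp [gainOf]
            rw [hgain]
            have hpsi : ψ e ∈ G.walkGroup ψ {e} (G.src e) := psi_mem_walkGroup_loop hloop
            have h1 : μ (↑(G.walkGroup ψ (G.CompAt ↑Y (G.src e)) (G.src e)) ∪ {ψ e}) ≤
                μ (↑(G.walkGroup ψ (G.CompAt ↑Y (G.src e)) (G.src e)) ∪
                  ↑(G.walkGroup ψ {e} (G.src e))) :=
              hmono _ _ (Set.union_subset_union_right _
                (Set.singleton_subset_iff.2 (SetLike.mem_coe.2 hpsi)))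
            have h2 := hsubm ↑(G.walkGroup ψ (G.CompAt ↑Y (G.src e)) (G.src e))
              ↑(G.walkGroup ψ {e} (G.src e))
            have h3 := hnn (↑(G.walkGroup ψ (G.CompAt ↑Y (G.src e)) (G.src e)) ∩
              ↑(G.walkGroup ψ {e} (G.src e)))
            linarith
        · -- ¬ hconX
          obtain ⟨W, hWY⟩ := exists_walk_compAt (F := Y) hconY
          rw [gMu_insert_d hconj hclos he hconY hpY hWY]
          have hbound := hμ1 (↑(G.walkGroup ψ (G.CompAt ↑Y (G.src e)) (G.src e)) ∪
            {ψ e * gainOf ψ W})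
          by_cases hpX : G.src e ∈ G.vertexFinset X
          · by_cases hqX : G.tgt e ∈ G.vertexFinset X
            · -- X config e
              rw [gMu_insert_e hconj hclos heX hconX hpX hqX]
              have h1 : μ ↑(G.walkGroup ψ (G.CompAt ↑X (G.src e)) (G.src e)) ≤
                  μ (↑(G.walkGroup ψ (G.CompAt ↑X (G.src e)) (G.src e)) ∪
                    (fun x => ψ e * x * (ψ e)⁻¹) ''
                      ↑(G.walkGroup ψ (G.CompAt ↑X (G.tgt e)) (G.tgt e))) :=
                hmono _ _ Set.subset_union_left
              have hcompeq : G.CompAt ↑Y (G.tgt e) = G.CompAt ↑Y (G.src e) :=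
                compAt_congr hconY
              have hBsub : (↑(G.walkGroup ψ (G.CompAt ↑X (G.tgt e)) (G.tgt e)) : Set Γ) ⊆
                  ↑(G.walkGroup ψ (G.CompAt ↑Y (G.src e)) (G.tgt e)) := by
                rw [← hcompeq]
                exact SetLike.coe_subset_coe.2 (walkGroup_mono (compAt_mono hsubc))
              have hbase : μ ↑(G.walkGroup ψ (G.CompAt ↑Y (G.src e)) (G.tgt e)) =
                  μ ↑(G.walkGroup ψ (G.CompAt ↑Y (G.src e)) (G.src e)) := by
                have hr : G.Reaches (G.CompAt ↑Y (G.src e)) (G.tgt e) (G.src e) := ⟨W, hWY⟩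
                exact mu_walkGroup_congr hconj hr.symm
              have h2 : μ ↑(G.walkGroup ψ (G.CompAt ↑X (G.tgt e)) (G.tgt e)) ≤
                  μ ↑(G.walkGroup ψ (G.CompAt ↑Y (G.src e)) (G.src e)) := by
                rw [← hbase]
                exact hmono _ _ hBsub
              linarith
            · have hro : G.tgt e ≠ G.src e := fun hh => hqX (by rw [hh]; exact hpX)
              rw [gMu_insert_c hconj heX (Or.inl ⟨rfl, rfl⟩) hpX hqX hro]
              have := hnn ↑(G.walkGroup ψ (G.CompAt ↑Y (G.src e)) (G.src e))
              linarith
          · by_cases hqX : G.tgt e ∈ G.vertexFinset X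
            · have hro : G.src e ≠ G.tgt e := fun hh => hpX (by rw [hh]; exact hqX)
              rw [gMu_insert_c hconj heX (Or.inr ⟨rfl, rfl⟩) hqX hpX hro]
              have := hnn ↑(G.walkGroup ψ (G.CompAt ↑Y (G.src e)) (G.src e))
              linarith
            · have hpq : G.src e ≠ G.tgt e := by
                intro hh
                exact hconX (by rw [hh]; exact Reaches.refl G _ _)
              rw [gMu_insert_a hconj heX hpq hpX hqX]
              have := hnn ↑(G.walkGroup ψ (G.CompAt ↑Y (G.src e)) (G.src e))
              have := hnn ↑(G.walkGroup ψ {e} (G.src e))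
              linarith
      · -- Case B : Y config e
        have hconX : ¬ G.Reaches ↑X (G.tgt e) (G.src e) := fun h => hconY (h.mono hsubc)
        rw [gMu_insert_e hconj hclos he hconY hpY hqY]
        have hconjY : μ ((fun x => ψ e * x * (ψ e)⁻¹) ''
            ↑(G.walkGroup ψ (G.CompAt ↑Y (G.tgt e)) (G.tgt e))) =
            μ ↑(G.walkGroup ψ (G.CompAt ↑Y (G.tgt e)) (G.tgt e)) :=
          hconj _ _ ⟨1, SetLike.mem_coe.2 (one_mem _)⟩
        by_cases hpX : G.src e ∈ G.vertexFinset X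
        · by_cases hqX : G.tgt e ∈ G.vertexFinset X
          · -- X config e : double submodularity
            rw [gMu_insert_e hconj hclos heX hconX hpX hqX]
            have hconjX : μ ((fun x => ψ e * x * (ψ e)⁻¹) ''
                ↑(G.walkGroup ψ (G.CompAt ↑X (G.tgt e)) (G.tgt e))) =
                μ ↑(G.walkGroup ψ (G.CompAt ↑X (G.tgt e)) (G.tgt e)) :=
              hconj _ _ ⟨1, SetLike.mem_coe.2 (one_mem _)⟩
            have hT1S1 : (↑(G.walkGroup ψ (G.CompAt ↑X (G.src e)) (G.src e)) : Set Γ) ⊆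
                ↑(G.walkGroup ψ (G.CompAt ↑Y (G.src e)) (G.src e)) :=
              SetLike.coe_subset_coe.2 (walkGroup_mono (compAt_mono hsubc))
            have hT2S2 : (fun x => ψ e * x * (ψ e)⁻¹) ''
                (↑(G.walkGroup ψ (G.CompAt ↑X (G.tgt e)) (G.tgt e)) : Set Γ) ⊆
                (fun x => ψ e * x * (ψ e)⁻¹) ''
                  ↑(G.walkGroup ψ (G.CompAt ↑Y (G.tgt e)) (G.tgt e)) :=
              Set.image_mono (SetLike.coe_subset_coe.2 (walkGroup_mono (compAt_mono hsubc)))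
            have hstep1 := hsubm (↑(G.walkGroup ψ (G.CompAt ↑Y (G.src e)) (G.src e)) ∪
                (fun x => ψ e * x * (ψ e)⁻¹) ''
                  ↑(G.walkGroup ψ (G.CompAt ↑X (G.tgt e)) (G.tgt e)))
              ((fun x => ψ e * x * (ψ e)⁻¹) ''
                ↑(G.walkGroup ψ (G.CompAt ↑Y (G.tgt e)) (G.tgt e)))
            have hu1 : (↑(G.walkGroup ψ (G.CompAt ↑Y (G.src e)) (G.src e)) ∪
                (fun x => ψ e * x * (ψ e)⁻¹) ''
                  ↑(G.walkGroup ψ (G.CompAt ↑X (G.tgt e)) (G.tgt e))) ∪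
                (fun x => ψ e * x * (ψ e)⁻¹) ''
                  ↑(G.walkGroup ψ (G.CompAt ↑Y (G.tgt e)) (G.tgt e)) =
                ↑(G.walkGroup ψ (G.CompAt ↑Y (G.src e)) (G.src e)) ∪
                (fun x => ψ e * x * (ψ e)⁻¹) ''
                  ↑(G.walkGroup ψ (G.CompAt ↑Y (G.tgt e)) (G.tgt e)) := by
              rw [Set.union_assoc, Set.union_eq_self_of_subset_left hT2S2]
            rw [hu1] at hstep1
            have hi1 : μ ((fun x => ψ e * x * (ψ e)⁻¹) ''
                ↑(G.walkGroup ψ (G.CompAt ↑X (G.tgt e)) (G.tgt e))) ≤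
                μ ((↑(G.walkGroup ψ (G.CompAt ↑Y (G.src e)) (G.src e)) ∪
                  (fun x => ψ e * x * (ψ e)⁻¹) ''
                    ↑(G.walkGroup ψ (G.CompAt ↑X (G.tgt e)) (G.tgt e))) ∩
                  (fun x => ψ e * x * (ψ e)⁻¹) ''
                    ↑(G.walkGroup ψ (G.CompAt ↑Y (G.tgt e)) (G.tgt e))) :=
              hmono _ _ (Set.subset_inter Set.subset_union_right hT2S2)
            have hstep2 := hsubm ↑(G.walkGroup ψ (G.CompAt ↑Y (G.src e)) (G.src e))
              (↑(G.walkGroup ψ (G.CompAt ↑X (G.src e)) (G.src e)) ∪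
                (fun x => ψ e * x * (ψ e)⁻¹) ''
                  ↑(G.walkGroup ψ (G.CompAt ↑X (G.tgt e)) (G.tgt e)))
            have hu2 : (↑(G.walkGroup ψ (G.CompAt ↑Y (G.src e)) (G.src e)) : Set Γ) ∪
                (↑(G.walkGroup ψ (G.CompAt ↑X (G.src e)) (G.src e)) ∪
                  (fun x => ψ e * x * (ψ e)⁻¹) ''
                    ↑(G.walkGroup ψ (G.CompAt ↑X (G.tgt e)) (G.tgt e))) =
                ↑(G.walkGroup ψ (G.CompAt ↑Y (G.src e)) (G.src e)) ∪
                  (fun x => ψ e * x * (ψ e)⁻¹) ''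
                    ↑(G.walkGroup ψ (G.CompAt ↑X (G.tgt e)) (G.tgt e)) := by
              rw [← Set.union_assoc, Set.union_eq_self_of_subset_right hT1S1]
            rw [hu2] at hstep2
            have hi2 : μ ↑(G.walkGroup ψ (G.CompAt ↑X (G.src e)) (G.src e)) ≤
                μ (↑(G.walkGroup ψ (G.CompAt ↑Y (G.src e)) (G.src e)) ∩
                  (↑(G.walkGroup ψ (G.CompAt ↑X (G.src e)) (G.src e)) ∪
                    (fun x => ψ e * x * (ψ e)⁻¹) ''
                      ↑(G.walkGroup ψ (G.CompAt ↑X (G.tgt e)) (G.tgt e)))) :=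
              hmono _ _ (Set.subset_inter hT1S1 Set.subset_union_left)
            linarith
          · have hro : G.tgt e ≠ G.src e := fun hh => hqX (by rw [hh]; exact hpX)
            rw [gMu_insert_c hconj heX (Or.inl ⟨rfl, rfl⟩) hpX hqX hro]
            have hstep := hsubm ↑(G.walkGroup ψ (G.CompAt ↑Y (G.src e)) (G.src e))
              ((fun x => ψ e * x * (ψ e)⁻¹) ''
                ↑(G.walkGroup ψ (G.CompAt ↑Y (G.tgt e)) (G.tgt e)))
            have := hnn (↑(G.walkGroup ψ (G.CompAt ↑Y (G.src e)) (G.src e)) ∩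
              (fun x => ψ e * x * (ψ e)⁻¹) ''
                ↑(G.walkGroup ψ (G.CompAt ↑Y (G.tgt e)) (G.tgt e)))
            linarith
        · by_cases hqX : G.tgt e ∈ G.vertexFinset X
          · have hro : G.src e ≠ G.tgt e := fun hh => hpX (by rw [hh]; exact hqX)
            rw [gMu_insert_c hconj heX (Or.inr ⟨rfl, rfl⟩) hqX hpX hro]
            have hstep := hsubm ↑(G.walkGroup ψ (G.CompAt ↑Y (G.src e)) (G.src e))
              ((fun x => ψ e * x * (ψ e)⁻¹) ''
                ↑(G.walkGroup ψ (G.CompAt ↑Y (G.tgt e)) (G.tgt e)))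
            have := hnn (↑(G.walkGroup ψ (G.CompAt ↑Y (G.src e)) (G.src e)) ∩
              (fun x => ψ e * x * (ψ e)⁻¹) ''
                ↑(G.walkGroup ψ (G.CompAt ↑Y (G.tgt e)) (G.tgt e)))
            linarith
          · have hpq : G.src e ≠ G.tgt e := by
              intro hh
              exact hconY (by rw [hh]; exact Reaches.refl G _ _)
            rw [gMu_insert_a hconj heX hpq hpX hqX]
            have hstep := hsubm ↑(G.walkGroup ψ (G.CompAt ↑Y (G.src e)) (G.src e))
              ((fun x => ψ e * x * (ψ e)⁻¹) ''
                ↑(G.walkGroup ψ (G.CompAt ↑Y (G.tgt e)) (G.tgt e)))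
            have h0 := hnn (↑(G.walkGroup ψ (G.CompAt ↑Y (G.src e)) (G.src e)) ∩
              (fun x => ψ e * x * (ψ e)⁻¹) ''
                ↑(G.walkGroup ψ (G.CompAt ↑Y (G.tgt e)) (G.tgt e)))
            have h1 := hnn ↑(G.walkGroup ψ {e} (G.src e))
            linarith
    · -- Case C : Y config c with r = src e
      have hqX : G.tgt e ∉ G.vertexFinset X := fun h => hqY (vertexFinset_mono hXY h)
      have hro : G.tgt e ≠ G.src e := fun hh => hqY (by rw [hh]; exact hpY)
      rw [gMu_insert_c hconj he (Or.inl ⟨rfl, rfl⟩) hpY hqY hro]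
      by_cases hpX : G.src e ∈ G.vertexFinset X
      · rw [gMu_insert_c hconj heX (Or.inl ⟨rfl, rfl⟩) hpX hqX hro]
        linarith
      · have hpq : G.src e ≠ G.tgt e := fun hh => hro hh.symm
        rw [gMu_insert_a hconj heX hpq hpX hqX]
        have := hnn ↑(G.walkGroup ψ {e} (G.src e))
        linarith
  · by_cases hqY : G.tgt e ∈ G.vertexFinset Y
    · -- Case D : Y config c with r = tgt e
      have hpX : G.src e ∉ G.vertexFinset X := fun h => hpY (vertexFinset_mono hXY h)
      have hro : G.src e ≠ G.tgt e := fun hh => hpY (by rw [hh]; exact hqY)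
      rw [gMu_insert_c hconj he (Or.inr ⟨rfl, rfl⟩) hqY hpY hro]
      by_cases hqX : G.tgt e ∈ G.vertexFinset X
      · rw [gMu_insert_c hconj heX (Or.inr ⟨rfl, rfl⟩) hqX hpX hro]
        linarith
      · rw [gMu_insert_a hconj heX hro hpX hqX]
        have := hnn ↑(G.walkGroup ψ {e} (G.src e))
        linarith
    · -- Case E : both endpoints isolated in Y (hence in X)
      have hpX : G.src e ∉ G.vertexFinset X := fun h => hpY (vertexFinset_mono hXY h)
      have hqX : G.tgt e ∉ G.vertexFinset X := fun h => hqY (vertexFinset_mono hXY h)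
      by_cases hloop : G.tgt e = G.src e
      · rw [gMu_insert_b hconj he hloop hpY, gMu_insert_b hconj heX hloop hpX]
        linarith
      · have hpq : G.src e ≠ G.tgt e := fun hh => hloop hh.symm
        rw [gMu_insert_a hconj he hpq hpY hqY, gMu_insert_a hconj heX hpq hpX hqX]
        linarith

end DR

end GG

namespace GG

set_option linter.unusedSectionVars false
set_option linter.unusedVariables false

variable {V E : Type*} {G : GG V E}

section Final
variable [Fintype V] [Fintype E] [DecidableEq V] [DecidableEq E]
variable {Γ : Type*} [Group Γ] {ψ : E → Γ} {μ : Set Γ → ℝ}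

theorem gMu_mono_aux
    (hnn : ∀ S : Set Γ, 0 ≤ μ S)
    (hmono : ∀ S T : Set Γ, S ⊆ T → μ S ≤ μ T)
    (hclos : ∀ S : Set Γ, S.Nonempty → μ ↑(Subgroup.closure S) = μ S)
    (hconj : ∀ (S : Set Γ) (γ : Γ), S.Nonempty → μ ((fun x => γ * x * γ⁻¹) '' S) = μ S)
    (hμ1 : ∀ S : Set Γ, μ S ≤ 1) :
    ∀ (n : ℕ) (F₁ F₂ : Finset E), F₁ ⊆ F₂ → (F₂ \ F₁).card = n →
      G.gMu ψ μ F₁ ≤ G.gMu ψ μ F₂ := by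
  intro n
  induction n using Nat.strong_induction_on with
  | _ n ih =>
      intro F₁ F₂ hsub hcard
      rcases Finset.eq_empty_or_nonempty (F₂ \ F₁) with hemp | ⟨e, he⟩
      · have h2 : F₂ ⊆ F₁ := fun x hx => by
          by_contra hx1
          exact (Finset.eq_empty_iff_forall_notMem.1 hemp x) (Finset.mem_sdiff.2 ⟨hx, hx1⟩)
        rw [Finset.Subset.antisymm hsub h2]
      · obtain ⟨heF₂, heF₁⟩ := Finset.mem_sdiff.1 he
        have h1 : G.gMu ψ μ F₁ ≤ G.gMu ψ μ (insert e F₁) :=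
          gMu_insert_nonneg hnn hmono hclos hconj hμ1 heF₁
        have h2 : insert e F₁ ⊆ F₂ := Finset.insert_subset heF₂ hsub
        have h3 : F₂ \ insert e F₁ = (F₂ \ F₁).erase e := by
          ext x
          simp only [Finset.mem_sdiff, Finset.mem_erase, Finset.mem_insert]
          tauto
        have h4 : (F₂ \ insert e F₁).card < n := by
          rw [h3, Finset.card_erase_of_mem he, hcard]
          have : 0 < (F₂ \ F₁).card := Finset.card_pos.2 ⟨e, he⟩
          omega
        exact h1.trans (ih _ h4 _ _ h2 rfl)

theorem gMu_submod_aux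
    (hnn : ∀ S : Set Γ, 0 ≤ μ S)
    (hmono : ∀ S T : Set Γ, S ⊆ T → μ S ≤ μ T)
    (hsubm : ∀ S T : Set Γ, μ (S ∪ T) + μ (S ∩ T) ≤ μ S + μ T)
    (hclos : ∀ S : Set Γ, S.Nonempty → μ ↑(Subgroup.closure S) = μ S)
    (hconj : ∀ (S : Set Γ) (γ : Γ), S.Nonempty → μ ((fun x => γ * x * γ⁻¹) '' S) = μ S)
    (hμ1 : ∀ S : Set Γ, μ S ≤ 1) :
    ∀ (B X Y : Finset E), X ⊆ Y → (∀ b ∈ B, b ∉ Y) →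
      G.gMu ψ μ (Y ∪ B) - G.gMu ψ μ Y ≤ G.gMu ψ μ (X ∪ B) - G.gMu ψ μ X := by
  intro B
  induction B using Finset.induction_on with
  | empty =>
      intro X Y hXY hBY
      simp
  | @insert e B heB ih =>
      intro X Y hXY hBY
      have hBY' : ∀ b ∈ B, b ∉ Y := fun b hb => hBY b (Finset.mem_insert_of_mem hb)
      have heY : e ∉ Y := hBY e (Finset.mem_insert_self _ _)
      have heYB : e ∉ Y ∪ B := by
        rw [Finset.mem_union]
        rintro (h | h)
        · exact heY h
        · exact heB h
      have hXYB : X ∪ B ⊆ Y ∪ B := Finset.union_subset_union hXY (Finset.Subset.refl B)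
      have hrwY : Y ∪ insert e B = insert e (Y ∪ B) := by
        ext x
        simp only [Finset.mem_union, Finset.mem_insert]
        tauto
      have hrwX : X ∪ insert e B = insert e (X ∪ B) := by
        ext x
        simp only [Finset.mem_union, Finset.mem_insert]
        tauto
      have hDR := gMu_insert_DR (G := G) (ψ := ψ) hnn hmono hsubm hclos hconj hμ1 hXYB heYB
      have hIH := ih X Y hXY hBY'
      rw [hrwY, hrwX]
      linarith

end Final

end GG


/-- `μ` is a symmetric polymatroidal function over the group `Γ`: nonnegative,
normalized, monotone, submodular, invariant under taking generated subgroups,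
and invariant under conjugation. -/
def SymPolymatroidal {Γ : Type*} [Group Γ] (μ : Set Γ → ℝ) : Prop :=
  μ ∅ = 0 ∧ (∀ X : Set Γ, 0 ≤ μ X) ∧ (∀ X Y : Set Γ, X ⊆ Y → μ X ≤ μ Y) ∧
  (∀ X Y : Set Γ, μ (X ∪ Y) + μ (X ∩ Y) ≤ μ X + μ Y) ∧
  (∀ X : Set Γ, X.Nonempty → μ ↑(Subgroup.closure X) = μ X) ∧
  (∀ (X : Set Γ) (γ : Γ), X.Nonempty → μ ((fun x => γ * x * γ⁻¹) '' X) = μ X)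

/-- Theorem 4.2: for a symmetric polymatroidal function `μ : 2^Γ → [0,1]` and a finite
`Γ`-gain graph `(G,ψ)`, the function `g_μ` is monotone and submodular on `2^E`. -/
theorem gMu_monotone_submodular {V E Γ : Type*} [Group Γ]
    [Fintype V] [Fintype E] [DecidableEq V] [DecidableEq E]
    (G : GG V E) (ψ : E → Γ) (μ : Set Γ → ℝ)
    (hμ : SymPolymatroidal μ) (hμ1 : ∀ X : Set Γ, μ X ≤ 1) :
    (∀ F₁ F₂ : Finset E, F₁ ⊆ F₂ → G.gMu ψ μ F₁ ≤ G.gMu ψ μ F₂) ∧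
    (∀ F₁ F₂ : Finset E,
      G.gMu ψ μ (F₁ ∪ F₂) + G.gMu ψ μ (F₁ ∩ F₂) ≤ G.gMu ψ μ F₁ + G.gMu ψ μ F₂) := by
  obtain ⟨h0, hnn, hmono, hsubm, hclos, hconj⟩ := hμ
  constructor
  · intro F₁ F₂ h
    exact GG.gMu_mono_aux hnn hmono hclos hconj hμ1 _ F₁ F₂ h rfl
  · intro F₁ F₂
    have key := GG.gMu_submod_aux (G := G) (ψ := ψ) hnn hmono hsubm hclos hconj hμ1
      (F₁ \ F₂) (F₁ ∩ F₂) F₂ Finset.inter_subset_right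
      (fun b hb => (Finset.mem_sdiff.1 hb).2)
    have h1 : F₂ ∪ F₁ \ F₂ = F₁ ∪ F₂ := by
      ext x
      simp only [Finset.mem_union, Finset.mem_sdiff]
      tauto
    have h2 : F₁ ∩ F₂ ∪ F₁ \ F₂ = F₁ := by
      ext x
      simp only [Finset.mem_union, Finset.mem_inter, Finset.mem_sdiff]
      tauto
    rw [h1, h2] at key
    linarith
end

section
/- Let μ: 2^E → ℤ be a monotone submodular function with μ(e) ≥ 0 for all e ∈ E on a finite set E. Define μ̂(F) = min{ Σᵢ μ(Fᵢ) : {F₁,…,F_k} a partition of F into nonempty subsets } for nonempty F, and μ̂(∅)=0. Then μ̂ is monotone and submodular (hence (E, μ̂) is an integer polymatroid). -/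
/-- `P` is a partition of the finset `F` into nonempty parts. -/
def IsPartitionOf {E : Type*} [DecidableEq E] (F : Finset E) (P : Finset (Finset E)) : Prop :=
  (∀ A ∈ P, A.Nonempty) ∧ (P : Set (Finset E)).PairwiseDisjoint id ∧ P.sup id = F

/-- The Dilworth truncation `μ̂(F) = min { Σ_{A ∈ P} μ(A) : P a partition of F }`
(the empty set has the empty partition, giving `μ̂(∅) = 0`). -/
noncomputable def dilworth {E : Type*} [DecidableEq E] (μ : Finset E → ℤ) (F : Finset E) : ℤ :=
  sInf {n : ℤ | ∃ P : Finset (Finset E), IsPartitionOf F P ∧ n = ∑ A ∈ P, μ A}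

section Aux
variable {E : Type*} [DecidableEq E] {μ : Finset E → ℤ}

lemma aux_sum_nonneg (hmono : ∀ X Y : Finset E, X ⊆ Y → μ X ≤ μ Y)
    (hpos : ∀ e : E, 0 ≤ μ {e}) {F : Finset E} {P : Finset (Finset E)}
    (hP : IsPartitionOf F P) : 0 ≤ ∑ A ∈ P, μ A := by
  apply Finset.sum_nonneg
  intro A hA
  obtain ⟨e, he⟩ := hP.1 A hA
  exact le_trans (hpos e) (hmono {e} A (Finset.singleton_subset_iff.2 he))

lemma aux_singleton_part (F : Finset E) : IsPartitionOf F (F.image fun e => ({e} : Finset E)) := by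
  refine ⟨?_, ?_, ?_⟩
  · intro A hA
    obtain ⟨e, _, rfl⟩ := Finset.mem_image.1 hA
    exact Finset.singleton_nonempty e
  · intro A hA B hB hne
    simp only [Finset.coe_image, Set.mem_image] at hA hB
    obtain ⟨a, _, rfl⟩ := hA
    obtain ⟨b, _, rfl⟩ := hB
    simp only [Function.onFun, id]
    rw [Finset.disjoint_singleton]
    intro h; exact hne (by rw [h])
  · rw [Finset.sup_image]
    simp [Finset.sup_singleton_eq_self F]

lemma aux_set_nonempty (μ : Finset E → ℤ) (F : Finset E) :
    {n : ℤ | ∃ P : Finset (Finset E), IsPartitionOf F P ∧ n = ∑ A ∈ P, μ A}.Nonempty :=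
  ⟨_, F.image (fun e => ({e} : Finset E)), aux_singleton_part F, rfl⟩

lemma aux_bddBelow (hmono : ∀ X Y : Finset E, X ⊆ Y → μ X ≤ μ Y)
    (hpos : ∀ e : E, 0 ≤ μ {e}) (F : Finset E) :
    BddBelow {n : ℤ | ∃ P : Finset (Finset E), IsPartitionOf F P ∧ n = ∑ A ∈ P, μ A} := by
  refine ⟨0, ?_⟩
  rintro n ⟨P, hP, rfl⟩
  exact aux_sum_nonneg hmono hpos hP

lemma dilworth_le (hmono : ∀ X Y : Finset E, X ⊆ Y → μ X ≤ μ Y)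
    (hpos : ∀ e : E, 0 ≤ μ {e}) {F : Finset E} {P : Finset (Finset E)}
    (hP : IsPartitionOf F P) : dilworth μ F ≤ ∑ A ∈ P, μ A :=
  csInf_le (aux_bddBelow hmono hpos F) ⟨P, hP, rfl⟩

lemma dilworth_exists (hmono : ∀ X Y : Finset E, X ⊆ Y → μ X ≤ μ Y)
    (hpos : ∀ e : E, 0 ≤ μ {e}) (F : Finset E) :
    ∃ P : Finset (Finset E), IsPartitionOf F P ∧ dilworth μ F = ∑ A ∈ P, μ A := by
  obtain ⟨lb, hlb, hleast⟩ := Int.exists_least_of_bdd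
    (⟨0, by rintro n ⟨P, hP, rfl⟩; exact aux_sum_nonneg hmono hpos hP⟩)
    (aux_set_nonempty μ F)
  obtain ⟨P, hP, rfl⟩ := hlb
  refine ⟨P, hP, ?_⟩
  exact IsLeast.csInf_eq ⟨⟨P, hP, rfl⟩, hleast⟩

end Aux

section Aux2
variable {E : Type*} [DecidableEq E] {μ : Finset E → ℤ}

lemma aux_merge (hsub : ∀ X Y : Finset E, μ (X ∪ Y) + μ (X ∩ Y) ≤ μ X + μ Y)
    (B : Finset E) (C : Finset (Finset E)) (hd : (C : Set (Finset E)).PairwiseDisjoint id) :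
    μ (B ∪ C.sup id) + ∑ A ∈ C, μ (B ∩ A) ≤ μ B + ∑ A ∈ C, μ A := by
  induction C using Finset.induction_on with
  | empty => simp
  | @insert A C hAC ih =>
    have hd' : (C : Set (Finset E)).PairwiseDisjoint id :=
      hd.subset (by simp [Set.subset_insert])
    have hdisA : Disjoint (C.sup id) A := by
      rw [Finset.disjoint_sup_left]
      intro A' hA'
      exact hd (by simp [hA']) (by simp) (fun h => hAC (h ▸ hA'))
    have hinter : (B ∪ C.sup id) ∩ A = B ∩ A := by
      rw [Finset.union_inter_distrib_right, Finset.disjoint_iff_inter_eq_empty.1 hdisA,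
        Finset.union_empty]
    have h1 := hsub (B ∪ C.sup id) A
    rw [hinter] at h1
    have h2 := ih hd'
    have hsup : (insert A C).sup id = A ∪ C.sup id := by
      rw [Finset.sup_insert]; rfl
    have hU : B ∪ (insert A C).sup id = (B ∪ C.sup id) ∪ A := by
      rw [hsup, Finset.union_left_comm, Finset.union_comm A]
    rw [hU, Finset.sum_insert hAC, Finset.sum_insert hAC]
    linarith

end Aux2

section Aux3
variable {E : Type*} [DecidableEq E] {μ : Finset E → ℤ}

lemma aux_key (hsub : ∀ X Y : Finset E, μ (X ∪ Y) + μ (X ∩ Y) ≤ μ X + μ Y)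
    (Q : Finset (Finset E)) :
    ∀ R : Finset (Finset E),
      (∀ A ∈ Q, A.Nonempty) → (Q : Set (Finset E)).PairwiseDisjoint id →
      IsPartitionOf (R.sup id) R →
      ∃ R' S : Finset (Finset E),
        IsPartitionOf (R.sup id ∪ Q.sup id) R' ∧
        IsPartitionOf (R.sup id ∩ Q.sup id) S ∧
        ∑ A ∈ R', μ A + ∑ A ∈ S, μ A ≤ ∑ A ∈ R, μ A + ∑ A ∈ Q, μ A := by
  induction Q using Finset.induction_on with
  | empty =>
    intro R _ _ hR
    exact ⟨R, ∅, by simpa using hR, by simp [IsPartitionOf], by simp⟩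
  | @insert B Q hBQ ih =>
    intro R hne hdq hR
    obtain ⟨R', S, hR', hS, hsum⟩ := ih R (fun A hA => hne A (Finset.mem_insert_of_mem hA))
      (hdq.subset (by simp [Set.subset_insert])) hR
    -- basic facts
    have hBne : B.Nonempty := hne B (Finset.mem_insert_self _ _)
    have hBQdis : Disjoint B (Q.sup id) := by
      rw [Finset.disjoint_sup_right]
      intro A hA
      exact hdq (by simp) (by simp [hA]) (fun h => hBQ (h ▸ hA))
    -- split R' into parts meeting B and the rest
    set C : Finset (Finset E) := R'.filter (fun A => (A ∩ B).Nonempty) with hCdef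
    set D : Finset (Finset E) := R'.filter (fun A => ¬ (A ∩ B).Nonempty) with hDdef
    have hCD : C ∪ D = R' := Finset.filter_union_filter_not_eq _ R'
    have hCDdis : Disjoint C D := Finset.disjoint_filter_filter_not R' R' _
    have hCsubR' : C ⊆ R' := Finset.filter_subset _ _
    have hDsubR' : D ⊆ R' := Finset.filter_subset _ _
    have hCd : (C : Set (Finset E)).PairwiseDisjoint id :=
      hR'.2.1.subset (by exact_mod_cast Finset.coe_subset.2 hCsubR')
    set M : Finset E := B ∪ C.sup id with hMdef
    -- parts of D are disjoint from M
    have hMD : ∀ Dp ∈ D, Disjoint M Dp := by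
      intro Dp hDp
      rw [hDdef, Finset.mem_filter] at hDp
      have h1 : Disjoint B Dp := by
        rw [Finset.disjoint_iff_inter_eq_empty, Finset.inter_comm,
          ← Finset.not_nonempty_iff_eq_empty]
        exact hDp.2
      have h2 : Disjoint (C.sup id) Dp := by
        rw [Finset.disjoint_sup_left]
        intro A hA
        have hADp : A ≠ Dp := by
          intro h; subst h
          rw [hCdef, Finset.mem_filter] at hA
          exact hDp.2 hA.2
        exact hR'.2.1 (by exact_mod_cast hCsubR' hA) (by exact_mod_cast hDp.1) hADp
      rw [hMdef, Finset.disjoint_union_left]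
      exact ⟨h1, h2⟩
    have hMne : M.Nonempty := hBne.mono (Finset.subset_union_left)
    have hMnotD : M ∉ D := fun h => by
      have := hMD M h
      rw [disjoint_self] at this
      exact hMne.ne_empty (by simpa using this)
    -- each B ∩ A (A ∈ C) is inside R.sup id ∩ B
    have hBA_sub : ∀ A ∈ C, B ∩ A ⊆ R.sup id ∩ B := by
      intro A hA x hx
      rw [Finset.mem_inter] at hx
      have hxR' : x ∈ R'.sup id := Finset.mem_sup.2 ⟨A, hCsubR' hA, hx.2⟩
      rw [hR'.2.2, Finset.mem_union] at hxR'
      rcases hxR' with h | h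
      · exact Finset.mem_inter.2 ⟨h, hx.1⟩
      · exact absurd (Finset.disjoint_left.1 hBQdis hx.1) (fun hh => hh h)
    -- assemble the new partitions
    set Rn : Finset (Finset E) := insert M D with hRndef
    set Sn : Finset (Finset E) := S ∪ C.image (fun A => B ∩ A) with hSndef
    have hQsup : (insert B Q).sup id = B ∪ Q.sup id := by
      rw [Finset.sup_insert]; rfl
    have hsupCD : C.sup id ∪ D.sup id = R'.sup id := by
      conv_rhs => rw [← hCD]
      rw [Finset.sup_union]; rfl
    have hRnsup : Rn.sup id = R.sup id ∪ (insert B Q).sup id := by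
      rw [hRndef, Finset.sup_insert, hQsup]
      show M ∪ D.sup id = _
      rw [hMdef, Finset.union_assoc, hsupCD, hR'.2.2]
      ext x; simp only [Finset.mem_union]; tauto
    have hRnpart : IsPartitionOf (R.sup id ∪ (insert B Q).sup id) Rn := by
      refine ⟨?_, ?_, hRnsup⟩
      · intro A hA
        rw [hRndef, Finset.mem_insert] at hA
        rcases hA with rfl | hA
        · exact hMne
        · exact hR'.1 A (hDsubR' hA)
      · rw [hRndef, Finset.coe_insert]
        refine Set.PairwiseDisjoint.insert ?_ ?_
        · exact hR'.2.1.subset (by exact_mod_cast Finset.coe_subset.2 hDsubR')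
        · intro Dp hDp _
          exact hMD Dp (by exact_mod_cast hDp)
    have hinj : ∀ A ∈ C, ∀ A' ∈ C, B ∩ A = B ∩ A' → A = A' := by
      intro A hA A' hA' h
      by_contra hne'
      have hd := hCd (by exact_mod_cast hA) (by exact_mod_cast hA') hne'
      have hBAne : (B ∩ A).Nonempty := by
        rw [hCdef, Finset.mem_filter] at hA
        rw [Finset.inter_comm]; exact hA.2
      obtain ⟨x, hx⟩ := hBAne
      have hx' := h ▸ hx
      exact Finset.disjoint_left.1 hd (Finset.mem_inter.1 hx).2 (Finset.mem_inter.1 hx').2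
    have himsup : (C.image (fun A => B ∩ A)).sup id = R.sup id ∩ B := by
      apply le_antisymm
      · apply Finset.sup_le
        intro T hT
        obtain ⟨A, hA, rfl⟩ := Finset.mem_image.1 hT
        exact hBA_sub A hA
      · intro x hx
        rw [Finset.mem_inter] at hx
        have hxR' : x ∈ R'.sup id := by
          rw [hR'.2.2]; exact Finset.mem_union_left _ hx.1
        obtain ⟨A, hA, hxA⟩ := Finset.mem_sup.1 hxR'
        have hAC : A ∈ C := by
          rw [hCdef, Finset.mem_filter]
          exact ⟨hA, ⟨x, Finset.mem_inter.2 ⟨hxA, hx.2⟩⟩⟩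
        exact Finset.mem_sup.2 ⟨B ∩ A, Finset.mem_image_of_mem _ hAC,
          Finset.mem_inter.2 ⟨hx.2, hxA⟩⟩
    have hSsub : ∀ T ∈ S, T ⊆ R.sup id ∩ Q.sup id := by
      intro T hT
      have h := Finset.le_sup (f := id) hT
      rw [hS.2.2] at h
      exact h
    have hSimdis : Disjoint S (C.image (fun A => B ∩ A)) := by
      rw [Finset.disjoint_left]
      intro T hTS hTim
      obtain ⟨A, hA, rfl⟩ := Finset.mem_image.1 hTim
      obtain ⟨x, hx⟩ := hS.1 _ hTS
      have hxB : x ∈ B := (Finset.mem_inter.1 hx).1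
      have hxQ : x ∈ Q.sup id := (Finset.mem_inter.1 (hSsub _ hTS hx)).2
      exact Finset.disjoint_left.1 hBQdis hxB hxQ
    have hSnpart : IsPartitionOf (R.sup id ∩ (insert B Q).sup id) Sn := by
      refine ⟨?_, ?_, ?_⟩
      · intro T hT
        rw [hSndef, Finset.mem_union] at hT
        rcases hT with hT | hT
        · exact hS.1 T hT
        · obtain ⟨A, hA, rfl⟩ := Finset.mem_image.1 hT
          rw [hCdef, Finset.mem_filter] at hA
          rw [Finset.inter_comm]; exact hA.2
      · rw [hSndef, Finset.coe_union, Set.pairwiseDisjoint_union]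
        refine ⟨hS.2.1, ?_, ?_⟩
        · intro T hT T' hT' hne'
          obtain ⟨A, hA, rfl⟩ := Finset.mem_image.1 (by exact_mod_cast hT)
          obtain ⟨A', hA', rfl⟩ := Finset.mem_image.1 (by exact_mod_cast hT')
          have hAA' : A ≠ A' := fun h => hne' (by rw [h])
          have hd := hCd (by exact_mod_cast hA) (by exact_mod_cast hA') hAA'
          exact hd.mono Finset.inter_subset_right Finset.inter_subset_right
        · intro T hTS T' hT' _
          obtain ⟨A, hA, rfl⟩ := Finset.mem_image.1 (by exact_mod_cast hT')
          refine Finset.disjoint_left.2 ?_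
          intro x hxT hxBA
          have hxQ : x ∈ Q.sup id :=
            (Finset.mem_inter.1 (hSsub T (by exact_mod_cast hTS) hxT)).2
          exact Finset.disjoint_left.1 hBQdis (Finset.mem_inter.1 hxBA).1 hxQ
      · rw [hSndef, Finset.sup_union, hS.2.2, himsup, hQsup]
        show (R.sup id ∩ Q.sup id) ∪ (R.sup id ∩ B) = _
        ext x
        simp only [Finset.mem_union, Finset.mem_inter]
        tauto
    have hsumRn : ∑ A ∈ Rn, μ A = μ M + ∑ A ∈ D, μ A := Finset.sum_insert hMnotD
    have hsumSn : ∑ A ∈ Sn, μ A = ∑ A ∈ S, μ A + ∑ A ∈ C, μ (B ∩ A) := by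
      rw [hSndef, Finset.sum_union hSimdis, Finset.sum_image hinj]
    have hsumR' : ∑ A ∈ C, μ A + ∑ A ∈ D, μ A = ∑ A ∈ R', μ A := by
      rw [← Finset.sum_union hCDdis, hCD]
    have hmerge := aux_merge hsub B C hCd
    rw [← hMdef] at hmerge
    refine ⟨Rn, Sn, hRnpart, hSnpart, ?_⟩
    rw [Finset.sum_insert hBQ, hsumRn, hsumSn]
    linarith

lemma dilworth_mono (hmono : ∀ X Y : Finset E, X ⊆ Y → μ X ≤ μ Y)
    (hpos : ∀ e : E, 0 ≤ μ {e}) {X Y : Finset E} (hXY : X ⊆ Y) :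
    dilworth μ X ≤ dilworth μ Y := by
  obtain ⟨P, hP, heq⟩ := dilworth_exists hmono hpos Y
  rw [heq]
  set Pf : Finset (Finset E) := P.filter (fun A => (A ∩ X).Nonempty) with hPfdef
  set P' : Finset (Finset E) := Pf.image (fun A => A ∩ X) with hP'def
  have hinj : ∀ A ∈ Pf, ∀ A' ∈ Pf, A ∩ X = A' ∩ X → A = A' := by
    intro A hA A' hA' h
    by_contra hne'
    rw [hPfdef, Finset.mem_filter] at hA hA'
    have hd := hP.2.1 (by exact_mod_cast hA.1) (by exact_mod_cast hA'.1) hne'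
    obtain ⟨x, hx⟩ := hA.2
    have hx' := h ▸ hx
    exact Finset.disjoint_left.1 hd (Finset.mem_inter.1 hx).1 (Finset.mem_inter.1 hx').1
  have hpart : IsPartitionOf X P' := by
    refine ⟨?_, ?_, ?_⟩
    · intro T hT
      obtain ⟨A, hA, rfl⟩ := Finset.mem_image.1 hT
      rw [hPfdef, Finset.mem_filter] at hA
      exact hA.2
    · intro T hT T' hT' hne'
      obtain ⟨A, hA, rfl⟩ := Finset.mem_image.1 (by exact_mod_cast hT)
      obtain ⟨A', hA', rfl⟩ := Finset.mem_image.1 (by exact_mod_cast hT')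
      have hAA' : A ≠ A' := fun h => hne' (by rw [h])
      have hd := hP.2.1 (by exact_mod_cast Finset.filter_subset _ _ hA)
        (by exact_mod_cast Finset.filter_subset _ _ hA') hAA'
      exact hd.mono Finset.inter_subset_left Finset.inter_subset_left
    · apply le_antisymm
      · apply Finset.sup_le
        intro T hT
        obtain ⟨A, hA, rfl⟩ := Finset.mem_image.1 hT
        exact Finset.inter_subset_right
      · intro x hx
        have hxY : x ∈ P.sup id := by rw [hP.2.2]; exact hXY hx
        obtain ⟨A, hA, hxA⟩ := Finset.mem_sup.1 hxY
        have hAPf : A ∈ Pf := by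
          rw [hPfdef, Finset.mem_filter]
          exact ⟨hA, ⟨x, Finset.mem_inter.2 ⟨hxA, hx⟩⟩⟩
        exact Finset.mem_sup.2 ⟨A ∩ X, Finset.mem_image_of_mem _ hAPf,
          Finset.mem_inter.2 ⟨hxA, hx⟩⟩
  have h1 : dilworth μ X ≤ ∑ T ∈ P', μ T := dilworth_le hmono hpos hpart
  have h2 : ∑ T ∈ P', μ T = ∑ A ∈ Pf, μ (A ∩ X) := Finset.sum_image hinj
  have h3 : ∑ A ∈ Pf, μ (A ∩ X) ≤ ∑ A ∈ Pf, μ A :=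
    Finset.sum_le_sum (fun A _ => hmono _ _ Finset.inter_subset_left)
  have h4 : ∑ A ∈ Pf, μ A ≤ ∑ A ∈ P, μ A := by
    apply Finset.sum_le_sum_of_subset_of_nonneg (Finset.filter_subset _ _)
    intro A hA _
    obtain ⟨e, he⟩ := hP.1 A hA
    exact le_trans (hpos e) (hmono {e} A (Finset.singleton_subset_iff.2 he))
  linarith

end Aux3

/-- Let `μ : 2^E → ℤ` be monotone and submodular with `μ({e}) ≥ 0` for all `e`.
Then its Dilworth truncation `μ̂` is monotone and submodular. -/
theorem dilworth_monotone_submodular {E : Type*} [Fintype E] [DecidableEq E]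
    (μ : Finset E → ℤ)
    (hmono : ∀ X Y : Finset E, X ⊆ Y → μ X ≤ μ Y)
    (hsub : ∀ X Y : Finset E, μ (X ∪ Y) + μ (X ∩ Y) ≤ μ X + μ Y)
    (hpos : ∀ e : E, 0 ≤ μ {e}) :
    (∀ X Y : Finset E, X ⊆ Y → dilworth μ X ≤ dilworth μ Y) ∧
    (∀ X Y : Finset E,
      dilworth μ (X ∪ Y) + dilworth μ (X ∩ Y) ≤ dilworth μ X + dilworth μ Y) := by
  constructor
  · intro X Y hXY
    exact dilworth_mono hmono hpos hXY
  · intro X Y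
    obtain ⟨P, hP, hPeq⟩ := dilworth_exists (μ := μ) hmono hpos X
    obtain ⟨Q, hQ, hQeq⟩ := dilworth_exists (μ := μ) hmono hpos Y
    obtain ⟨R', S, hR', hS, hsum⟩ := aux_key hsub Q P hQ.1 hQ.2.1 ⟨hP.1, hP.2.1, rfl⟩
    rw [hP.2.2, hQ.2.2] at hR' hS
    have h1 : dilworth μ (X ∪ Y) ≤ ∑ A ∈ R', μ A := dilworth_le hmono hpos hR'
    have h2 : dilworth μ (X ∩ Y) ≤ ∑ A ∈ S, μ A := dilworth_le hmono hpos hS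
    rw [hPeq, hQeq]
    linarith
end

section
/- Let μ: 2^E → ℤ be an integer-valued monotone submodular function on a finite set E with μ(e) ≥ 0 for all e. Then the collection of sets F ⊆ E such that |X| ≤ μ(X) for every nonempty X ⊆ F forms the independent sets of a matroid on E, and the rank of F in this matroid equals min over subpartitions {F₁,…,F_k} of F of |F \ ∪ᵢFᵢ| + Σᵢ μ(Fᵢ). -/
/-- Independence in the matroid induced by `μ`: `|X| ≤ μ(X)` for every nonempty `X ⊆ F`. -/
def IndepOf {E : Type*} (μ : Finset E → ℤ) (F : Finset E) : Prop :=
  ∀ X ⊆ F, X.Nonempty → (X.card : ℤ) ≤ μ X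

/-- The rank of `F` in the induced matroid: the maximum size of an independent subset. -/
noncomputable def indRank {E : Type*} (μ : Finset E → ℤ) (F : Finset E) : ℤ :=
  sSup {n : ℤ | ∃ I ⊆ F, IndepOf μ I ∧ n = (I.card : ℤ)}

/-- The subpartition formula: `min |F \ ∪ᵢFᵢ| + Σᵢ μ(Fᵢ)` over subpartitions of `F`. -/
noncomputable def subpartMin {E : Type*} [DecidableEq E] (μ : Finset E → ℤ) (F : Finset E) : ℤ :=
  sInf {n : ℤ | ∃ P : Finset (Finset E), (∀ A ∈ P, A.Nonempty ∧ A ⊆ F) ∧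
    (P : Set (Finset E)).PairwiseDisjoint id ∧
    n = ((F \ P.sup id).card : ℤ) + ∑ A ∈ P, μ A}

section Aux

variable {E : Type*} [DecidableEq E] {μ : Finset E → ℤ}

omit [DecidableEq E] in
lemma mu_nonneg (hmono : ∀ X Y : Finset E, X ⊆ Y → μ X ≤ μ Y)
    (hpos : ∀ e : E, 0 ≤ μ {e}) {A : Finset E} (hA : A.Nonempty) : 0 ≤ μ A := by
  obtain ⟨e, he⟩ := hA
  exact (hpos e).trans (hmono {e} A (Finset.singleton_subset_iff.mpr he))

lemma card_inter_le_mu (hmono : ∀ X Y : Finset E, X ⊆ Y → μ X ≤ μ Y)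
    (hpos : ∀ e : E, 0 ≤ μ {e}) {I A : Finset E} (hI : IndepOf μ I)
    (hA : A.Nonempty) : ((A ∩ I).card : ℤ) ≤ μ A := by
  rcases (A ∩ I).eq_empty_or_nonempty with h | h
  · rw [h]; simpa using mu_nonneg hmono hpos hA
  · exact (hI (A ∩ I) Finset.inter_subset_right h).trans
      (hmono _ _ Finset.inter_subset_left)

lemma tight_union (hmono : ∀ X Y : Finset E, X ⊆ Y → μ X ≤ μ Y)
    (hsub : ∀ X Y : Finset E, μ (X ∪ Y) + μ (X ∩ Y) ≤ μ X + μ Y)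
    (hpos : ∀ e : E, 0 ≤ μ {e}) {I A B : Finset E} (hI : IndepOf μ I)
    (hA : μ A ≤ ((A ∩ I).card : ℤ)) (hB : μ B ≤ ((B ∩ I).card : ℤ))
    (hAB : (A ∩ B).Nonempty) : μ (A ∪ B) ≤ (((A ∪ B) ∩ I).card : ℤ) := by
  have h1 : ((A ∩ B ∩ I).card : ℤ) ≤ μ (A ∩ B) := card_inter_le_mu hmono hpos hI hAB
  have h2 := hsub A B
  have e1 : (A ∩ I) ∪ (B ∩ I) = (A ∪ B) ∩ I := by ext x; simp; try tauto
  have e2 : (A ∩ I) ∩ (B ∩ I) = (A ∩ B) ∩ I := by ext x; simp; try tauto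
  have hcard := Finset.card_union_add_card_inter (A ∩ I) (B ∩ I)
  rw [e1, e2] at hcard
  have hcard' : (((A ∪ B) ∩ I).card : ℤ) + ((A ∩ B ∩ I).card : ℤ)
      = ((A ∩ I).card : ℤ) + ((B ∩ I).card : ℤ) := by exact_mod_cast hcard
  linarith

/-- Strong duality: if `I` is independent in `F` and cannot be augmented by any element of
`F \ I`, then there is a subpartition of `F` whose value equals `|I|`. -/
lemma exists_tight_subpartition
    (hmono : ∀ X Y : Finset E, X ⊆ Y → μ X ≤ μ Y)
    (hsub : ∀ X Y : Finset E, μ (X ∪ Y) + μ (X ∩ Y) ≤ μ X + μ Y)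
    (hpos : ∀ e : E, 0 ≤ μ {e}) {F I : Finset E} (hIF : I ⊆ F) (hI : IndepOf μ I)
    (hmax : ∀ e ∈ F, e ∉ I → ¬ IndepOf μ (insert e I)) :
    ∃ P : Finset (Finset E), (∀ A ∈ P, A.Nonempty ∧ A ⊆ F) ∧
      (P : Set (Finset E)).PairwiseDisjoint id ∧
      ((F \ P.sup id).card : ℤ) + ∑ A ∈ P, μ A = (I.card : ℤ) := by
  classical
  set T : Finset (Finset E) :=
    F.powerset.filter (fun A => A.Nonempty ∧ μ A ≤ ((A ∩ I).card : ℤ)) with hT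
  have hTmem : ∀ A : Finset E, A ∈ T ↔ A ⊆ F ∧ A.Nonempty ∧ μ A ≤ ((A ∩ I).card : ℤ) := by
    intro A; simp [hT, Finset.mem_filter, Finset.mem_powerset, and_assoc]
  set P : Finset (Finset E) := T.filter (fun A => ∀ B ∈ T, A ⊆ B → A = B) with hP
  have hPT : P ⊆ T := Finset.filter_subset _ _
  -- every tight set extends to a maximal tight set
  have hext : ∀ X ∈ T, ∃ B ∈ P, X ⊆ B := by
    intro X hX
    have hne : (T.filter (fun B => X ⊆ B)).Nonempty := ⟨X, by simp [Finset.mem_filter, hX]⟩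
    obtain ⟨B, hBmem, hBmax⟩ := Finset.exists_max_image _ (fun B => B.card) hne
    rw [Finset.mem_filter] at hBmem
    refine ⟨B, ?_, hBmem.2⟩
    rw [hP, Finset.mem_filter]
    refine ⟨hBmem.1, fun C hC hBC => ?_⟩
    have hCmem : C ∈ T.filter (fun B => X ⊆ B) := by
      simp [Finset.mem_filter, hC, hBmem.2.trans hBC]
    exact Finset.eq_of_subset_of_card_le hBC (hBmax C hCmem)
  -- every element of F \ I lies in some member of P
  have hcover : ∀ e ∈ F, e ∉ I → ∃ A ∈ P, e ∈ A := by
    intro e heF heI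
    have hdep := hmax e heF heI
    rw [IndepOf] at hdep
    push_neg at hdep
    obtain ⟨X, hXsub, hXne, hXgt⟩ := hdep
    have heX : e ∈ X := by
      by_contra he
      have : X ⊆ I := fun x hx => by
        rcases Finset.mem_insert.mp (hXsub hx) with h | h
        · exact absurd (h ▸ hx) he
        · exact h
      exact absurd (hI X this hXne) (not_le.mpr hXgt)
    have hXI : X ∩ I = X.erase e := by
      ext x
      simp only [Finset.mem_inter, Finset.mem_erase]
      constructor
      · rintro ⟨hx, hxI⟩; exact ⟨fun h => heI (h ▸ hxI), hx⟩
      · rintro ⟨hxe, hx⟩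
        refine ⟨hx, ?_⟩
        rcases Finset.mem_insert.mp (hXsub hx) with h | h
        · exact absurd h hxe
        · exact h
    have hXF : X ⊆ F := hXsub.trans (Finset.insert_subset heF hIF)
    have htight : μ X ≤ ((X ∩ I).card : ℤ) := by
      rw [hXI, Finset.card_erase_of_mem heX]
      have hpos' : 1 ≤ X.card := Finset.card_pos.mpr hXne
      have : (X.card : ℤ) - 1 = ((X.card - 1 : ℕ) : ℤ) := by
        push_cast [hpos']; ring
      omega
    obtain ⟨B, hBP, hXB⟩ := hext X ((hTmem X).mpr ⟨hXF, hXne, htight⟩)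
    exact ⟨B, hBP, hXB heX⟩
  -- members of P are pairwise disjoint
  have hdisj : (P : Set (Finset E)).PairwiseDisjoint id := by
    intro A hA B hB hAB
    simp only [Finset.coe_mem, Finset.mem_coe] at hA hB
    rw [Function.onFun, id, id]
    by_contra hnd
    have hne : (A ∩ B).Nonempty := Finset.not_disjoint_iff_nonempty_inter.mp hnd
    have hAT := (hTmem A).mp (hPT hA)
    have hBT := (hTmem B).mp (hPT hB)
    have hUT : A ∪ B ∈ T := (hTmem _).mpr
      ⟨Finset.union_subset hAT.1 hBT.1, hAT.2.1.mono Finset.subset_union_left,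
        tight_union hmono hsub hpos hI hAT.2.2 hBT.2.2 hne⟩
    rw [hP, Finset.mem_filter] at hA hB
    have h1 : A = A ∪ B := hA.2 _ hUT Finset.subset_union_left
    have h2 : B = A ∪ B := hB.2 _ hUT Finset.subset_union_right
    exact hAB (h1.trans h2.symm)
  refine ⟨P, fun A hA => ⟨((hTmem A).mp (hPT hA)).2.1, ((hTmem A).mp (hPT hA)).1⟩, hdisj, ?_⟩
  -- compute the value
  have hdisj' : ∀ x ∈ P, ∀ y ∈ P, x ≠ y → Disjoint (id x) (id y) := by
    intro x hx y hy hxy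
    exact hdisj (Finset.mem_coe.mpr hx) (Finset.mem_coe.mpr hy) hxy
  have hsup : P.sup id = P.biUnion id := Finset.sup_eq_biUnion P id
  -- F \ sup ⊆ I, hence F \ sup = I \ sup
  have hFsub : F \ P.sup id = I \ P.sup id := by
    ext x
    simp only [Finset.mem_sdiff]
    constructor
    · rintro ⟨hxF, hxs⟩
      refine ⟨?_, hxs⟩
      by_contra hxI
      obtain ⟨A, hAP, hxA⟩ := hcover x hxF hxI
      exact hxs (Finset.mem_sup.mpr ⟨A, hAP, hxA⟩)
    · rintro ⟨hxI, hxs⟩; exact ⟨hIF hxI, hxs⟩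
  -- each tight set has μ A = |A ∩ I|
  have hmu_eq : ∀ A ∈ P, μ A = ((A ∩ I).card : ℤ) := by
    intro A hA
    have hAT := (hTmem A).mp (hPT hA)
    exact le_antisymm hAT.2.2 (card_inter_le_mu hmono hpos hI hAT.2.1)
  have hsum : ∑ A ∈ P, μ A = ((P.sup id ∩ I).card : ℤ) := by
    have h1 : P.sup id ∩ I = P.biUnion (fun A => A ∩ I) := by
      rw [hsup]; ext x; simp [Finset.mem_biUnion]; try tauto
    have h2 : (P.biUnion fun A => A ∩ I).card = ∑ A ∈ P, (A ∩ I).card := by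
      apply Finset.card_biUnion
      intro x hx y hy hxy
      exact Finset.disjoint_of_subset_left Finset.inter_subset_left
        (Finset.disjoint_of_subset_right Finset.inter_subset_left (hdisj' x hx y hy hxy))
    rw [h1, h2]
    push_cast
    exact Finset.sum_congr rfl hmu_eq
  rw [hFsub, hsum]
  have := Finset.card_sdiff_add_card_inter I (P.sup id)
  have hcomm : P.sup id ∩ I = I ∩ P.sup id := Finset.inter_comm _ _
  rw [hcomm]
  exact_mod_cast this

/-- Weak duality: any independent subset of `F` is at most any subpartition value. -/
lemma indep_le_subpart (hmono : ∀ X Y : Finset E, X ⊆ Y → μ X ≤ μ Y)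
    (hpos : ∀ e : E, 0 ≤ μ {e}) {F I : Finset E} (hIF : I ⊆ F) (hI : IndepOf μ I)
    {P : Finset (Finset E)} (hP : ∀ A ∈ P, A.Nonempty ∧ A ⊆ F)
    (hdisj : (P : Set (Finset E)).PairwiseDisjoint id) :
    (I.card : ℤ) ≤ ((F \ P.sup id).card : ℤ) + ∑ A ∈ P, μ A := by
  classical
  have hdisj' : ∀ x ∈ P, ∀ y ∈ P, x ≠ y → Disjoint (id x) (id y) := fun x hx y hy hxy =>
    hdisj (Finset.mem_coe.mpr hx) (Finset.mem_coe.mpr hy) hxy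
  have hsup : P.sup id = P.biUnion id := Finset.sup_eq_biUnion P id
  have hcard : I.card = (I \ P.sup id).card + (I ∩ P.sup id).card :=
    (Finset.card_sdiff_add_card_inter I (P.sup id)).symm
  have h1 : (I \ P.sup id).card ≤ (F \ P.sup id).card :=
    Finset.card_le_card (fun x hx => by
      rw [Finset.mem_sdiff] at hx ⊢; exact ⟨hIF hx.1, hx.2⟩)
  have h2 : I ∩ P.sup id = P.biUnion (fun A => A ∩ I) := by
    rw [hsup]; ext x; simp [Finset.mem_biUnion]; try tauto
  have h3 : (P.biUnion fun A => A ∩ I).card = ∑ A ∈ P, (A ∩ I).card := by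
    apply Finset.card_biUnion
    intro x hx y hy hxy
    exact Finset.disjoint_of_subset_left Finset.inter_subset_left
      (Finset.disjoint_of_subset_right Finset.inter_subset_left (hdisj' x hx y hy hxy))
  have h4 : (∑ A ∈ P, ((A ∩ I).card : ℤ)) ≤ ∑ A ∈ P, μ A :=
    Finset.sum_le_sum (fun A hA => card_inter_le_mu hmono hpos hI (hP A hA).1)
  have : (I.card : ℤ) = ((I \ P.sup id).card : ℤ) + ∑ A ∈ P, ((A ∩ I).card : ℤ) := by
    rw [hcard, h2, h3]; push_cast; ring
  rw [this]
  have h1' : ((I \ P.sup id).card : ℤ) ≤ ((F \ P.sup id).card : ℤ) := by exact_mod_cast h1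
  linarith

end Aux

/-- Edmonds: for an integer-valued monotone submodular `μ` with `μ({e}) ≥ 0`, the sets
`F` with `|X| ≤ μ(X)` for all nonempty `X ⊆ F` are the independent sets of a matroid on
`E` (empty set independent, hereditary, augmentation), whose rank function is given by
the subpartition formula. -/
theorem induced_matroid_of_submodular {E : Type*} [Fintype E] [DecidableEq E]
    (μ : Finset E → ℤ)
    (hmono : ∀ X Y : Finset E, X ⊆ Y → μ X ≤ μ Y)
    (hsub : ∀ X Y : Finset E, μ (X ∪ Y) + μ (X ∩ Y) ≤ μ X + μ Y)
    (hpos : ∀ e : E, 0 ≤ μ {e}) :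
    IndepOf μ ∅ ∧
    (∀ F₁ F₂ : Finset E, F₁ ⊆ F₂ → IndepOf μ F₂ → IndepOf μ F₁) ∧
    (∀ I J : Finset E, IndepOf μ I → IndepOf μ J → I.card < J.card →
      ∃ e ∈ J \ I, IndepOf μ (insert e I)) ∧
    (∀ F : Finset E, indRank μ F = subpartMin μ F) := by
  classical
  refine ⟨?_, ?_, ?_, ?_⟩
  · intro X hX hXne
    exact absurd (Finset.subset_empty.mp hX) (Finset.nonempty_iff_ne_empty.mp hXne)
  · intro F₁ F₂ h12 h2 X hX hXne
    exact h2 X (hX.trans h12) hXne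
  · -- augmentation
    intro I J hI hJ hcard
    by_contra hno
    push_neg at hno
    set F := I ∪ J with hF
    have hIF : I ⊆ F := Finset.subset_union_left
    have hmax : ∀ e ∈ F, e ∉ I → ¬ IndepOf μ (insert e I) := by
      intro e heF heI
      rcases Finset.mem_union.mp heF with h | h
      · exact absurd h heI
      · exact hno e (Finset.mem_sdiff.mpr ⟨h, heI⟩)
    obtain ⟨P, hP, hPd, hval⟩ :=
      exists_tight_subpartition hmono hsub hpos hIF hI hmax
    have hweak := indep_le_subpart hmono hpos (Finset.subset_union_right : J ⊆ F) hJ hP hPd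
    rw [hval] at hweak
    exact absurd hweak (not_le.mpr (by exact_mod_cast hcard))
  · -- rank formula
    intro F
    obtain ⟨I, hImem, hImax⟩ := Finset.exists_max_image
      (F.powerset.filter (fun I => IndepOf μ I)) (fun I => I.card)
      ⟨∅, by
        simp only [Finset.mem_filter, Finset.mem_powerset]
        exact ⟨Finset.empty_subset F, fun X hX hXne =>
          absurd (Finset.subset_empty.mp hX) (Finset.nonempty_iff_ne_empty.mp hXne)⟩⟩
    rw [Finset.mem_filter, Finset.mem_powerset] at hImem
    obtain ⟨hIF, hI⟩ := hImem
    have hmax : ∀ e ∈ F, e ∉ I → ¬ IndepOf μ (insert e I) := by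
      intro e heF heI hind
      have hmem : insert e I ∈ F.powerset.filter (fun I => IndepOf μ I) := by
        rw [Finset.mem_filter, Finset.mem_powerset]
        exact ⟨Finset.insert_subset heF hIF, hind⟩
      have := hImax _ hmem
      rw [Finset.card_insert_of_notMem heI] at this
      omega
    obtain ⟨P, hP, hPd, hval⟩ := exists_tight_subpartition hmono hsub hpos hIF hI hmax
    have hrank : indRank μ F = (I.card : ℤ) := by
      apply IsGreatest.csSup_eq
      constructor
      · exact ⟨I, hIF, hI, rfl⟩
      · rintro n ⟨I', hI'F, hI', rfl⟩
        have : I' ∈ F.powerset.filter (fun I => IndepOf μ I) := by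
          rw [Finset.mem_filter, Finset.mem_powerset]; exact ⟨hI'F, hI'⟩
        exact_mod_cast hImax _ this
    have hmin : subpartMin μ F = (I.card : ℤ) := by
      apply IsLeast.csInf_eq
      constructor
      · exact ⟨P, hP, hPd, hval.symm⟩
      · rintro n ⟨P', hP', hP'd, rfl⟩
        exact indep_le_subpart hmono hpos hIF hI hP' hP'd
    rw [hrank, hmin]
end

section
/- Let Γ be a group with a linear representation ρ: Γ → GL(𝔽^d) over a field 𝔽. Define d_ρ(X) = dim_𝔽 span{ image(I_d − ρ(γ)) : γ ∈ X } for X ⊆ Γ (with d_ρ(∅)=0). Then d_ρ is monotone, submodular, invariant under conjugation, and invariant under taking generated subgroups; in particular μ = d_ρ/d is a symmetric polymatroidal function over Γ. -/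
/-- `d_ρ(X) = dim_𝔽 span{ image(I − ρ(γ)) : γ ∈ X }`. -/
noncomputable def dRho {𝔽 : Type*} [Field 𝔽] {d : ℕ} {Γ : Type*} [Group Γ]
    (ρ : Γ →* ((Fin d → 𝔽) ≃ₗ[𝔽] (Fin d → 𝔽))) (X : Set Γ) : ℕ :=
  Module.finrank 𝔽
    ↥(⨆ γ ∈ X, LinearMap.range (LinearMap.id - (ρ γ).toLinearMap))

section Aux

variable {𝔽 : Type*} [Field 𝔽] {d : ℕ} {Γ : Type*} [Group Γ]

/-- `I − ρ(g)` as a linear map. -/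
def Arho (ρ : Γ →* ((Fin d → 𝔽) ≃ₗ[𝔽] (Fin d → 𝔽))) (g : Γ) :
    (Fin d → 𝔽) →ₗ[𝔽] (Fin d → 𝔽) := LinearMap.id - (ρ g).toLinearMap

/-- The span of the images `image(I − ρ(γ))`, `γ ∈ X`. -/
noncomputable def Srho (ρ : Γ →* ((Fin d → 𝔽) ≃ₗ[𝔽] (Fin d → 𝔽))) (X : Set Γ) :
    Submodule 𝔽 (Fin d → 𝔽) := ⨆ γ ∈ X, LinearMap.range (Arho ρ γ)

variable (ρ : Γ →* ((Fin d → 𝔽) ≃ₗ[𝔽] (Fin d → 𝔽)))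

lemma Arho_apply (g : Γ) (x : Fin d → 𝔽) : Arho ρ g x = x - ρ g x := rfl

lemma range_mul_le (a b : Γ) :
    LinearMap.range (Arho ρ (a*b)) ≤
      LinearMap.range (Arho ρ a) ⊔ LinearMap.range (Arho ρ b) := by
  rintro _ ⟨x, rfl⟩
  have h : Arho ρ (a*b) x = Arho ρ a (ρ b x) + Arho ρ b x := by
    simp [Arho_apply, map_mul]
  rw [h]
  exact Submodule.add_mem_sup (LinearMap.mem_range_self _ _) (LinearMap.mem_range_self _ _)

lemma range_inv_le (a : Γ) :
    LinearMap.range (Arho ρ a⁻¹) ≤ LinearMap.range (Arho ρ a) := by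
  rintro _ ⟨x, rfl⟩
  refine ⟨-(ρ a⁻¹ x), ?_⟩
  have h : (ρ a) ((ρ a)⁻¹ x) = x := (ρ a).apply_symm_apply x
  simp [Arho_apply, map_inv, h]
  abel

lemma supr_closure (X : Set Γ) :
    Srho ρ ((Subgroup.closure X : Subgroup Γ) : Set Γ) = Srho ρ X := by
  apply le_antisymm
  · refine iSup₂_le fun γ hγ => ?_
    induction hγ using Subgroup.closure_induction with
    | mem g hg => exact le_iSup₂_of_le g hg le_rfl
    | one =>
      rintro _ ⟨x, rfl⟩
      simp [Arho_apply, Submodule.zero_mem]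
    | mul a b _ _ ha hb => exact (range_mul_le ρ a b).trans (sup_le ha hb)
    | inv a _ ha => exact (range_inv_le ρ a).trans ha
  · exact iSup₂_le fun γ hγ => le_iSup₂_of_le γ (Subgroup.subset_closure hγ) le_rfl

lemma supr_conj (X : Set Γ) (γ : Γ) :
    Srho ρ ((fun x => γ * x * γ⁻¹) '' X) = Submodule.map (ρ γ).toLinearMap (Srho ρ X) := by
  unfold Srho
  rw [Submodule.map_iSup, iSup_image]
  refine iSup_congr fun x => ?_
  rw [Submodule.map_iSup]
  refine iSup_congr fun hx => ?_
  have hm : ∀ (e f : (Fin d → 𝔽) ≃ₗ[𝔽] (Fin d → 𝔽)) v, (e * f) v = e (f v) := fun _ _ _ => rfl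
  have h : Arho ρ (γ * x * γ⁻¹)
      = ((ρ γ).toLinearMap ∘ₗ Arho ρ x) ∘ₗ (ρ γ⁻¹).toLinearMap := by
    refine LinearMap.ext fun v => ?_
    have h0 : (ρ γ) ((ρ γ)⁻¹ v) = v := (ρ γ).apply_symm_apply v
    simp [Arho_apply, map_mul, map_inv, hm, h0]
  rw [h, LinearMap.range_comp, LinearEquiv.range, Submodule.map_top, LinearMap.range_comp]

lemma Srho_mono {X Y : Set Γ} (h : X ⊆ Y) : Srho ρ X ≤ Srho ρ Y :=
  iSup₂_le fun γ hγ => le_iSup₂_of_le γ (h hγ) le_rfl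

lemma Srho_union (X Y : Set Γ) : Srho ρ (X ∪ Y) = Srho ρ X ⊔ Srho ρ Y := by
  unfold Srho; rw [iSup_union]

lemma dRho_eq (X : Set Γ) : dRho ρ X = Module.finrank 𝔽 (Srho ρ X) := rfl

lemma dRho_mono {X Y : Set Γ} (h : X ⊆ Y) : dRho ρ X ≤ dRho ρ Y := by
  rw [dRho_eq, dRho_eq]
  exact Submodule.finrank_mono (Srho_mono ρ h)

lemma dRho_submodular (X Y : Set Γ) :
    dRho ρ (X ∪ Y) + dRho ρ (X ∩ Y) ≤ dRho ρ X + dRho ρ Y := by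
  simp only [dRho_eq]
  have h1 : Module.finrank 𝔽 (Srho ρ (X ∩ Y)) ≤ Module.finrank 𝔽 ↥(Srho ρ X ⊓ Srho ρ Y) :=
    Submodule.finrank_mono (le_inf (Srho_mono ρ Set.inter_subset_left)
      (Srho_mono ρ Set.inter_subset_right))
  rw [Srho_union]
  have := Submodule.finrank_sup_add_finrank_inf_eq (Srho ρ X) (Srho ρ Y)
  omega

lemma dRho_conj (X : Set Γ) (γ : Γ) :
    dRho ρ ((fun x => γ * x * γ⁻¹) '' X) = dRho ρ X := by
  rw [dRho_eq, dRho_eq, supr_conj]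
  exact LinearEquiv.finrank_map_eq (ρ γ) (Srho ρ X)

lemma dRho_closure (X : Set Γ) :
    dRho ρ ((Subgroup.closure X : Subgroup Γ) : Set Γ) = dRho ρ X := by
  rw [dRho_eq, dRho_eq, supr_closure]

end Aux

/-- For a representation `ρ : Γ → GL(𝔽^d)`, the function
`d_ρ(X) = dim span{image(I − ρ(γ)) : γ ∈ X}` is monotone, submodular, invariant under
conjugation, and invariant under taking generated subgroups; in particular
`μ = d_ρ/d` is a symmetric polymatroidal function over `Γ`. -/
theorem dRho_symPolymatroidal {𝔽 : Type*} [Field 𝔽] {d : ℕ} {Γ : Type*} [Group Γ]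
    (ρ : Γ →* ((Fin d → 𝔽) ≃ₗ[𝔽] (Fin d → 𝔽))) :
    (∀ X Y : Set Γ, X ⊆ Y → dRho ρ X ≤ dRho ρ Y) ∧
    (∀ X Y : Set Γ, dRho ρ (X ∪ Y) + dRho ρ (X ∩ Y) ≤ dRho ρ X + dRho ρ Y) ∧
    (∀ (X : Set Γ) (γ : Γ), dRho ρ ((fun x => γ * x * γ⁻¹) '' X) = dRho ρ X) ∧
    (∀ X : Set Γ, X.Nonempty → dRho ρ ↑(Subgroup.closure X) = dRho ρ X) ∧
    SymPolymatroidal (fun X => (dRho ρ X : ℝ) / d) := by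
  have hd0 : (0:ℝ) ≤ ((d:ℝ))⁻¹ := by positivity
  refine ⟨fun X Y h => dRho_mono ρ h, dRho_submodular ρ, dRho_conj ρ,
    fun X _ => dRho_closure ρ X, ?_, ?_, ?_, ?_, ?_, ?_⟩
  · have : dRho ρ (∅ : Set Γ) = 0 := by
      rw [dRho_eq]
      rw [show Srho ρ (∅ : Set Γ) = ⊥ from le_bot_iff.mp (iSup₂_le fun γ hγ => absurd hγ (Set.notMem_empty γ))]
      simp
    simp [this]
  · intro X; positivity
  · intro X Y h
    simp only [div_eq_mul_inv]
    exact mul_le_mul_of_nonneg_right (by exact_mod_cast dRho_mono ρ h) hd0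
  · intro X Y
    simp only [div_eq_mul_inv, ← add_mul]
    refine mul_le_mul_of_nonneg_right ?_ hd0
    exact_mod_cast dRho_submodular ρ X Y
  · intro X _
    simp [dRho_closure ρ X]
  · intro X γ _
    simp [dRho_conj ρ X γ]
end
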